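/- arXiv:1304.7829 — 8 statements merged into one kernel-verified Lean document; each statement's English description precedes it below -/
import Mathlib

section
/- Let A, B be n×p real matrices and let κ(M, s) = min over J with |J| ≤ s and δ ≠ 0 with ‖δ_{J^c}‖₁ ≤ 3‖δ_J‖₁ of ‖Mδ‖₂ / (√n ‖δ_J‖₂). Suppose κ(B, s) ≥ κ₂ > 0 and max_{i,j} n⁻¹|a_iᵀa_j − b_iᵀb_j| ≤ κ₂²/(64 s), where a_i, b_i are the columns of A and B. Then κ(A, s) ≥ κ₂/2. -/
open Finset Matrix

/-- Deterministic core of Lemma A.1: if the restricted eigenvalue of `B` is at least `κ₂ > 0`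
and the columns of `A` and `B` have entrywise Gram difference at most `κ₂²/(64 s)` (scaled by
`n⁻¹`), then the restricted eigenvalue of `A` is at least `κ₂/2`. The restricted eigenvalue
condition `κ(M, s) ≥ κ` is expressed as: for every `J` with `|J| ≤ s` and every `δ` in the
cone `‖δ_{Jᶜ}‖₁ ≤ 3‖δ_J‖₁`, one has `‖Mδ‖₂ ≥ κ √n ‖δ_J‖₂`. -/
theorem stmt2 (n p s : ℕ) (hn : 0 < n) (hs : 0 < s)
    (A B : Matrix (Fin n) (Fin p) ℝ) (κ₂ : ℝ) (hκ₂ : 0 < κ₂)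
    (hRE : ∀ (J : Finset (Fin p)) (δ : Fin p → ℝ), J.card ≤ s →
      (∑ i ∈ Jᶜ, |δ i| ≤ 3 * ∑ i ∈ J, |δ i|) →
      κ₂ * Real.sqrt n * Real.sqrt (∑ i ∈ J, (δ i) ^ 2) ≤
        Real.sqrt (∑ r, (B.mulVec δ r) ^ 2))
    (hGram : ∀ i j : Fin p,
      (1 / (n : ℝ)) * |(∑ r, A r i * A r j) - ∑ r, B r i * B r j| ≤ κ₂ ^ 2 / (64 * s)) :
    ∀ (J : Finset (Fin p)) (δ : Fin p → ℝ), J.card ≤ s →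
      (∑ i ∈ Jᶜ, |δ i| ≤ 3 * ∑ i ∈ J, |δ i|) →
      (κ₂ / 2) * Real.sqrt n * Real.sqrt (∑ i ∈ J, (δ i) ^ 2) ≤
        Real.sqrt (∑ r, (A.mulVec δ r) ^ 2) := by
  intro J δ hJ hcone
  have hn' : (0:ℝ) < n := by exact_mod_cast hn
  have hs' : (0:ℝ) < s := by exact_mod_cast hs
  set Q := ∑ i ∈ J, (δ i)^2 with hQdef
  have hQ0 : 0 ≤ Q := Finset.sum_nonneg (fun i _ => sq_nonneg _)
  -- quadratic form expansion
  have expand : ∀ M : Matrix (Fin n) (Fin p) ℝ,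
      (∑ r, (M.mulVec δ r)^2) = ∑ i, ∑ j, δ i * δ j * (∑ r, M r i * M r j) := by
    intro M
    have h1 : ∀ r, (M.mulVec δ r)^2 = ∑ i, ∑ j, δ i * δ j * (M r i * M r j) := by
      intro r
      simp only [Matrix.mulVec, dotProduct]
      rw [sq, Finset.sum_mul_sum]
      refine Finset.sum_congr rfl fun i _ => Finset.sum_congr rfl fun j _ => by ring
    simp only [h1]
    rw [Finset.sum_comm]
    refine Finset.sum_congr rfl fun i _ => ?_
    rw [Finset.sum_comm]
    refine Finset.sum_congr rfl fun j _ => ?_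
    rw [← Finset.mul_sum]
  -- Gram entry bound
  have hc : (0:ℝ) ≤ κ₂^2/(64*s) := by positivity
  have hgij : ∀ i j, |(∑ r, A r i * A r j) - ∑ r, B r i * B r j| ≤ n * (κ₂^2/(64*s)) := by
    intro i j
    have h := hGram i j
    rw [one_div, inv_mul_le_iff₀ hn'] at h
    exact h
  -- ℓ¹ bound
  set L := ∑ i, |δ i| with hLdef
  have hL0 : 0 ≤ L := Finset.sum_nonneg fun i _ => abs_nonneg _
  have hSJ0 : (0:ℝ) ≤ ∑ i ∈ J, |δ i| := Finset.sum_nonneg fun i _ => abs_nonneg _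
  have hLsplit : L = (∑ i ∈ J, |δ i|) + ∑ i ∈ Jᶜ, |δ i| := (Finset.sum_add_sum_compl J _).symm
  have hL4 : L ≤ 4 * ∑ i ∈ J, |δ i| := by rw [hLsplit]; linarith
  have hCS : (∑ i ∈ J, |δ i|)^2 ≤ s * Q := by
    have := sq_sum_le_card_mul_sum_sq (s := J) (f := fun i => |δ i|)
    simp only [sq_abs] at this
    calc (∑ i ∈ J, |δ i|)^2 ≤ (J.card : ℝ) * ∑ i ∈ J, (δ i)^2 := by exact_mod_cast this
      _ ≤ s * Q := by
          apply mul_le_mul_of_nonneg_right _ hQ0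
          exact_mod_cast hJ
  have hL2 : L^2 ≤ 16 * (s * Q) := by
    calc L^2 ≤ (4 * ∑ i ∈ J, |δ i|)^2 := by
          apply pow_le_pow_left₀ hL0 hL4
      _ = 16 * (∑ i ∈ J, |δ i|)^2 := by ring
      _ ≤ 16 * (s * Q) := by linarith
  -- difference bound
  have hdiff : |(∑ r, (A.mulVec δ r)^2) - ∑ r, (B.mulVec δ r)^2|
      ≤ L^2 * (n * (κ₂^2/(64*s))) := by
    have hXY : (∑ r, (A.mulVec δ r)^2) - ∑ r, (B.mulVec δ r)^2
        = ∑ i, ∑ j, δ i * δ j * ((∑ r, A r i * A r j) - ∑ r, B r i * B r j) := by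
      rw [expand A, expand B, ← Finset.sum_sub_distrib]
      refine Finset.sum_congr rfl fun i _ => ?_
      rw [← Finset.sum_sub_distrib]
      exact Finset.sum_congr rfl fun j _ => by ring
    rw [hXY]
    calc |∑ i, ∑ j, δ i * δ j * ((∑ r, A r i * A r j) - ∑ r, B r i * B r j)|
        ≤ ∑ i, |∑ j, δ i * δ j * ((∑ r, A r i * A r j) - ∑ r, B r i * B r j)| :=
          Finset.abs_sum_le_sum_abs _ _
      _ ≤ ∑ i, ∑ j, |δ i * δ j * ((∑ r, A r i * A r j) - ∑ r, B r i * B r j)| :=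
          Finset.sum_le_sum fun i _ => Finset.abs_sum_le_sum_abs _ _
      _ ≤ ∑ i, ∑ j, |δ i| * |δ j| * (n * (κ₂^2/(64*s))) := by
          refine Finset.sum_le_sum fun i _ => Finset.sum_le_sum fun j _ => ?_
          rw [abs_mul, abs_mul]
          exact mul_le_mul_of_nonneg_left (hgij i j) (by positivity)
      _ = L^2 * (n * (κ₂^2/(64*s))) := by
          simp only [← Finset.sum_mul, ← Finset.mul_sum]
          rw [hLdef]; ring
  -- lower bound on ‖Bδ‖²
  have hBsum0 : 0 ≤ ∑ r, (B.mulVec δ r)^2 := Finset.sum_nonneg fun r _ => sq_nonneg _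
  have hAsum0 : 0 ≤ ∑ r, (A.mulVec δ r)^2 := Finset.sum_nonneg fun r _ => sq_nonneg _
  have hB : κ₂^2 * n * Q ≤ ∑ r, (B.mulVec δ r)^2 := by
    have h := hRE J δ hJ hcone
    have hlhs0 : 0 ≤ κ₂ * Real.sqrt n * Real.sqrt Q := by positivity
    have := pow_le_pow_left₀ hlhs0 h 2
    rw [Real.sq_sqrt hBsum0] at this
    calc κ₂^2 * n * Q = (κ₂ * Real.sqrt n * Real.sqrt Q)^2 := by
          rw [mul_pow, mul_pow, Real.sq_sqrt hn'.le, Real.sq_sqrt hQ0]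
      _ ≤ _ := this
  -- lower bound on ‖Aδ‖²
  have key : (κ₂/2)^2 * n * Q ≤ ∑ r, (A.mulVec δ r)^2 := by
    have h1 : (∑ r, (B.mulVec δ r)^2) - (∑ r, (A.mulVec δ r)^2)
        ≤ L^2 * (n * (κ₂^2/(64*s))) := by
      have := neg_abs_le ((∑ r, (A.mulVec δ r)^2) - ∑ r, (B.mulVec δ r)^2)
      linarith [hdiff]
    have h2 : L^2 * (n * (κ₂^2/(64*s))) ≤ 16 * (s * Q) * (n * (κ₂^2/(64*s))) :=
      mul_le_mul_of_nonneg_right hL2 (by positivity)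
    have h3 : 16 * (s * Q) * (n * (κ₂^2/(64*s))) = κ₂^2 * n * Q / 4 := by
      field_simp
      ring
    nlinarith [hB]
  -- conclude via square roots
  have hlhs0 : 0 ≤ (κ₂/2) * Real.sqrt n * Real.sqrt Q := by positivity
  have hsq : ((κ₂/2) * Real.sqrt n * Real.sqrt Q)^2 ≤ ∑ r, (A.mulVec δ r)^2 := by
    rw [mul_pow, mul_pow, Real.sq_sqrt hn'.le, Real.sq_sqrt hQ0]
    exact key
  calc (κ₂/2) * Real.sqrt n * Real.sqrt Q
      = Real.sqrt (((κ₂/2) * Real.sqrt n * Real.sqrt Q)^2) := (Real.sqrt_sq hlhs0).symm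
    _ ≤ Real.sqrt (∑ r, (A.mulVec δ r)^2) := Real.sqrt_le_sqrt hsq
end

section
/- Let X̂ be an n×p matrix, y = Xβ₀ + η with X an n×p matrix, β₀ ∈ ℝᵖ with support S, and let β̂ minimize β ↦ (2n)⁻¹‖y − X̂β‖₂² + μ‖β‖₁. If ‖n⁻¹X̂ᵀη − n⁻¹X̂ᵀ(X̂ − X)β₀‖_∞ ≤ μ/2, then (2n)⁻¹‖X̂(β̂ − β₀)‖₂² + (μ/2)‖β̂ − β₀‖₁ ≤ 2μ‖β̂_S − β₀_S‖₁. -/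
open Finset Matrix

/-- Basic Lasso inequality (deterministic core of Lemma A.2): if `β̂` minimizes
`(2n)⁻¹‖y − X̂β‖₂² + μ‖β‖₁` with `y = Xβ₀ + η`, `S = supp(β₀)`, and the noise
condition `‖n⁻¹X̂ᵀη − n⁻¹X̂ᵀ(X̂−X)β₀‖_∞ ≤ μ/2` holds, then
`(2n)⁻¹‖X̂(β̂−β₀)‖₂² + (μ/2)‖β̂−β₀‖₁ ≤ 2μ‖β̂_S − β₀_S‖₁`. -/
theorem stmt4 (n p : ℕ) (hn : 0 < n)
    (X Xh : Matrix (Fin n) (Fin p) ℝ) (η : Fin n → ℝ) (β₀ βh : Fin p → ℝ)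
    (μ : ℝ) (hμ : 0 < μ)
    (y : Fin n → ℝ) (hy : y = X.mulVec β₀ + η)
    (S : Finset (Fin p)) (hS : ∀ j, j ∈ S ↔ β₀ j ≠ 0)
    (hmin : ∀ β : Fin p → ℝ,
      (1 / (2 * n : ℝ)) * (∑ r, (y r - Xh.mulVec βh r) ^ 2) + μ * ∑ j, |βh j| ≤
        (1 / (2 * n : ℝ)) * (∑ r, (y r - Xh.mulVec β r) ^ 2) + μ * ∑ j, |β j|)
    (hnoise : ∀ j : Fin p,
      |(1 / (n : ℝ)) * (Xhᵀ.mulVec η) j -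
        (1 / (n : ℝ)) * (Xhᵀ.mulVec ((Xh - X).mulVec β₀)) j| ≤ μ / 2) :
    (1 / (2 * n : ℝ)) * (∑ r, (Xh.mulVec (βh - β₀) r) ^ 2) +
        (μ / 2) * ∑ j, |βh j - β₀ j| ≤ 2 * μ * ∑ j ∈ S, |βh j - β₀ j| := by
  have hn' : (0 : ℝ) < n := by exact_mod_cast hn
  set Δ : Fin p → ℝ := βh - β₀ with hΔ
  set w : Fin n → ℝ := η - (Xh - X).mulVec β₀ with hw
  have hyb : ∀ r, y r - Xh.mulVec β₀ r = w r := by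
    intro r
    simp only [hy, hw, sub_mulVec, Pi.add_apply, Pi.sub_apply]
    ring
  have hyh : ∀ r, y r - Xh.mulVec βh r = w r - Xh.mulVec Δ r := by
    intro r
    have : Xh.mulVec Δ = Xh.mulVec βh - Xh.mulVec β₀ := by
      rw [hΔ, mulVec_sub]
    rw [this]
    have := hyb r
    simp only [Pi.sub_apply] at *
    linarith
  set A : ℝ := ∑ r, w r * Xh.mulVec Δ r with hA
  set Q : ℝ := ∑ r, (Xh.mulVec Δ r) ^ 2 with hQ
  set W : ℝ := ∑ r, (w r) ^ 2 with hW
  have key1 : (∑ r, (y r - Xh.mulVec βh r) ^ 2) = W - 2 * A + Q := by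
    have : (∑ r, (y r - Xh.mulVec βh r) ^ 2)
        = ∑ r, ((w r) ^ 2 - 2 * (w r * Xh.mulVec Δ r) + (Xh.mulVec Δ r) ^ 2) := by
      refine Finset.sum_congr rfl fun r _ => ?_
      rw [hyh r]; ring
    rw [this, Finset.sum_add_distrib, Finset.sum_sub_distrib, ← Finset.mul_sum]
  have key2 : (∑ r, (y r - Xh.mulVec β₀ r) ^ 2) = W := by
    refine Finset.sum_congr rfl fun r _ => by rw [hyb r]
  have h1 := hmin β₀
  rw [key1, key2] at h1
  have h2 : (1 / (2 * n : ℝ)) * Q ≤ (1 / n) * A + μ * ((∑ j, |β₀ j|) - ∑ j, |βh j|) := by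
    have e : (1 / (2 * n : ℝ)) * (W - 2 * A + Q)
        = (1 / (2 * n)) * W - (1 / n) * A + (1 / (2 * n)) * Q := by
      field_simp
    rw [e] at h1
    linarith
  -- rewrite A as a sum over j
  have hA' : A = ∑ j, (Xhᵀ.mulVec η j - Xhᵀ.mulVec ((Xh - X).mulVec β₀) j) * Δ j := by
    have h1' : A = w ⬝ᵥ Xh.mulVec Δ := rfl
    have h2' : w ⬝ᵥ Xh.mulVec Δ = Xhᵀ.mulVec w ⬝ᵥ Δ := by
      rw [Matrix.dotProduct_mulVec, Matrix.mulVec_transpose]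
    have h3' : Xhᵀ.mulVec w = Xhᵀ.mulVec η - Xhᵀ.mulVec ((Xh - X).mulVec β₀) := by
      rw [hw, mulVec_sub]
    rw [h1', h2', h3']
    simp [dotProduct, Pi.sub_apply]
  have hAle : (1 / (n : ℝ)) * A ≤ (μ / 2) * ∑ j, |Δ j| := by
    rw [hA', Finset.mul_sum, Finset.mul_sum]
    refine Finset.sum_le_sum fun j _ => ?_
    have hb := hnoise j
    have : (1 / (n : ℝ)) * ((Xhᵀ.mulVec η j - Xhᵀ.mulVec ((Xh - X).mulVec β₀) j) * Δ j)
        = ((1 / (n : ℝ)) * Xhᵀ.mulVec η j - (1 / (n : ℝ)) * Xhᵀ.mulVec ((Xh - X).mulVec β₀) j) * Δ j := by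
      ring
    rw [this]
    calc ((1 / (n : ℝ)) * Xhᵀ.mulVec η j - (1 / (n : ℝ)) * Xhᵀ.mulVec ((Xh - X).mulVec β₀) j) * Δ j
        ≤ |((1 / (n : ℝ)) * Xhᵀ.mulVec η j - (1 / (n : ℝ)) * Xhᵀ.mulVec ((Xh - X).mulVec β₀) j) * Δ j| :=
          le_abs_self _
      _ = |(1 / (n : ℝ)) * Xhᵀ.mulVec η j - (1 / (n : ℝ)) * Xhᵀ.mulVec ((Xh - X).mulVec β₀) j| * |Δ j| :=
          abs_mul _ _
      _ ≤ (μ / 2) * |Δ j| := by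
          exact mul_le_mul_of_nonneg_right hb (abs_nonneg _)
  -- ℓ1 decomposition
  have hdecomp : (∑ j, (|Δ j| + |β₀ j| - |βh j|)) ≤ 2 * ∑ j ∈ S, |Δ j| := by
    have hzero : ∀ j ∈ Finset.univ, j ∉ S → |Δ j| + |β₀ j| - |βh j| = 0 := by
      intro j _ hj
      have hb0 : β₀ j = 0 := by
        by_contra h
        exact hj ((hS j).mpr h)
      simp [hΔ, Pi.sub_apply, hb0]
    have heq : (∑ j ∈ S, (|Δ j| + |β₀ j| - |βh j|)) = ∑ j, (|Δ j| + |β₀ j| - |βh j|) :=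
      Finset.sum_subset (Finset.subset_univ S) hzero
    rw [← heq, Finset.mul_sum]
    refine Finset.sum_le_sum fun j _ => ?_
    have : |β₀ j| - |βh j| ≤ |Δ j| := by
      have := abs_sub_abs_le_abs_sub (β₀ j) (βh j)
      have h2 : |β₀ j - βh j| = |Δ j| := by
        rw [hΔ]; simp [Pi.sub_apply, abs_sub_comm]
      linarith
    linarith
  -- combine
  have hgoal1 : (1 / (2 * n : ℝ)) * Q + (μ / 2) * ∑ j, |Δ j|
      ≤ μ * ∑ j, (|Δ j| + |β₀ j| - |βh j|) := by
    have : μ * ∑ j, (|Δ j| + |β₀ j| - |βh j|)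
        = μ * (∑ j, |Δ j|) + μ * ((∑ j, |β₀ j|) - ∑ j, |βh j|) := by
      rw [Finset.sum_sub_distrib, Finset.sum_add_distrib]; ring
    rw [this]
    linarith
  have hmul : μ * ∑ j, (|Δ j| + |β₀ j| - |βh j|) ≤ μ * (2 * ∑ j ∈ S, |Δ j|) :=
    mul_le_mul_of_nonneg_left hdecomp hμ.le
  have hfin : (1 / (2 * n : ℝ)) * Q + (μ / 2) * ∑ j, |Δ j| ≤ 2 * μ * ∑ j ∈ S, |Δ j| := by
    nlinarith
  simpa [hΔ, Pi.sub_apply] using hfin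
end

section
/- Suppose β̂ minimizes the Lasso objective (2n)⁻¹‖y − X̂β‖₂² + μ‖β‖₁ with y = Xβ₀ + η, the noise condition ‖n⁻¹X̂ᵀη − n⁻¹X̂ᵀ(X̂−X)β₀‖_∞ ≤ μ/2 holds, and κ(X̂, s) ≥ κ₂/2 > 0 where s = |S|, S = supp(β₀). Then ‖X̂(β̂ − β₀)‖₂² ≤ (64/κ₂²) n s μ² and ‖β̂ − β₀‖₁ ≤ (64/κ₂²) s μ. -/
open Finset Matrix

set_option maxHeartbeats 2000000

/-- Deterministic core of Theorem 2: under the noise condition and the restricted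
eigenvalue condition `κ(X̂, s) ≥ κ₂/2`, the Lasso estimator satisfies the prediction
bound `‖X̂(β̂−β₀)‖₂² ≤ (64/κ₂²) n s μ²` and the estimation bound
`‖β̂−β₀‖₁ ≤ (64/κ₂²) s μ`, where `s = |S|`, `S = supp(β₀)`. -/
theorem stmt6 (n p : ℕ) (hn : 0 < n)
    (X Xh : Matrix (Fin n) (Fin p) ℝ) (η : Fin n → ℝ) (β₀ βh : Fin p → ℝ)
    (μ : ℝ) (hμ : 0 < μ)
    (y : Fin n → ℝ) (hy : y = X.mulVec β₀ + η)
    (S : Finset (Fin p)) (hS : ∀ j, j ∈ S ↔ β₀ j ≠ 0)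
    (hmin : ∀ β : Fin p → ℝ,
      (1 / (2 * n : ℝ)) * (∑ r, (y r - Xh.mulVec βh r) ^ 2) + μ * ∑ j, |βh j| ≤
        (1 / (2 * n : ℝ)) * (∑ r, (y r - Xh.mulVec β r) ^ 2) + μ * ∑ j, |β j|)
    (s : ℕ) (hs : S.card = s)
    (κ₂ : ℝ) (hκ₂ : 0 < κ₂)
    (hRE : ∀ (J : Finset (Fin p)) (δ : Fin p → ℝ), J.card ≤ s →
      (∑ i ∈ Jᶜ, |δ i| ≤ 3 * ∑ i ∈ J, |δ i|) →
      (κ₂ / 2) * Real.sqrt n * Real.sqrt (∑ i ∈ J, (δ i) ^ 2) ≤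
        Real.sqrt (∑ r, (Xh.mulVec δ r) ^ 2))
    (hnoise : ∀ j : Fin p,
      |(1 / (n : ℝ)) * (Xhᵀ.mulVec η) j -
        (1 / (n : ℝ)) * (Xhᵀ.mulVec ((Xh - X).mulVec β₀)) j| ≤ μ / 2) :
    (∑ r, (Xh.mulVec (βh - β₀) r) ^ 2) ≤ (64 / κ₂ ^ 2) * n * s * μ ^ 2 ∧
      (∑ j, |βh j - β₀ j|) ≤ (64 / κ₂ ^ 2) * s * μ := by

  have hn' : (0:ℝ) < n := by exact_mod_cast hn
  set δ : Fin p → ℝ := βh - β₀ with hδ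
  set w : Fin n → ℝ := η - (Xh - X).mulVec β₀ with hw
  -- abbreviations
  set A : ℝ := ∑ r, (Xh.mulVec δ r) ^ 2 with hA
  set I : ℝ := ∑ r, w r * Xh.mulVec δ r with hI
  set W : ℝ := ∑ r, (w r) ^ 2 with hW
  set N0 : ℝ := ∑ j, |β₀ j| with hN0
  set Nh : ℝ := ∑ j, |βh j| with hNh
  set L1S : ℝ := ∑ i ∈ S, |δ i| with hL1S
  set L1Sc : ℝ := ∑ i ∈ Sᶜ, |δ i| with hL1Sc
  have hδa : ∀ j, δ j = βh j - β₀ j := fun j => rfl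
  have hAnn : (0:ℝ) ≤ A := Finset.sum_nonneg fun r _ => sq_nonneg _
  have hL1Snn : (0:ℝ) ≤ L1S := Finset.sum_nonneg fun i _ => abs_nonneg _
  have hL1Scnn : (0:ℝ) ≤ L1Sc := Finset.sum_nonneg fun i _ => abs_nonneg _
  -- residual identities
  have e1 : ∀ r, y r - Xh.mulVec β₀ r = w r := by
    intro r
    simp [hy, hw, Matrix.sub_mulVec, Pi.add_apply, Pi.sub_apply]
    ring
  have e2 : ∀ r, y r - Xh.mulVec βh r = w r - Xh.mulVec δ r := by
    intro r
    have : Xh.mulVec δ = Xh.mulVec βh - Xh.mulVec β₀ := by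
      rw [hδ, Matrix.mulVec_sub]
    simp [hy, hw, this, Matrix.sub_mulVec, Pi.add_apply, Pi.sub_apply]
    ring
  -- basic inequality: A ≤ 2*I + 2*n*μ*(N0 - Nh)
  have hbasic : A ≤ 2 * I + 2 * n * μ * (N0 - Nh) := by
    have h := hmin β₀
    have eqh : ∑ r, (y r - Xh.mulVec βh r) ^ 2 = W - 2 * I + A := by
      rw [Finset.sum_congr rfl fun r _ => by rw [e2 r]]
      have : ∀ r : Fin n, (w r - Xh.mulVec δ r) ^ 2
          = (w r) ^ 2 - 2 * (w r * Xh.mulVec δ r) + (Xh.mulVec δ r) ^ 2 := fun r => by ring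
      rw [Finset.sum_congr rfl fun r _ => this r, Finset.sum_add_distrib,
        Finset.sum_sub_distrib, ← Finset.mul_sum]
    have eq0 : ∑ r, (y r - Xh.mulVec β₀ r) ^ 2 = W := by
      rw [Finset.sum_congr rfl fun r _ => by rw [e1 r]]
    rw [eqh, eq0] at h
    -- h : (1/(2n)) * (W - 2*I + A) + μ * Nh ≤ (1/(2n)) * W + μ * N0
    have h2 := mul_le_mul_of_nonneg_left h (by positivity : (0:ℝ) ≤ 2 * n)
    have l : (2 * (n:ℝ)) * ((1 / (2 * n : ℝ)) * (W - 2 * I + A) + μ * Nh)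
        = (W - 2 * I + A) + 2 * n * μ * Nh := by
      field_simp
    have r : (2 * (n:ℝ)) * ((1 / (2 * n : ℝ)) * W + μ * N0) = W + 2 * n * μ * N0 := by
      field_simp
    rw [l, r] at h2
    linarith
  -- bound on I
  have hIbound : I ≤ n * (μ / 2) * (L1S + L1Sc) := by
    have hIeq : I = ∑ j, (Xhᵀ.mulVec w) j * δ j := by
      simp only [hI, Matrix.mulVec, dotProduct, Matrix.transpose_apply,
        Finset.mul_sum, Finset.sum_mul]
      rw [Finset.sum_comm]
      exact Finset.sum_congr rfl fun j _ => Finset.sum_congr rfl fun r _ => by ring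
    have hXj : ∀ j, |(Xhᵀ.mulVec w) j| ≤ n * (μ / 2) := by
      intro j
      have h1 : Xhᵀ.mulVec w = Xhᵀ.mulVec η - Xhᵀ.mulVec ((Xh - X).mulVec β₀) := by
        rw [hw, Matrix.mulVec_sub]
      have h2 := hnoise j
      have h3 : (1 / (n:ℝ)) * (Xhᵀ.mulVec η) j - (1 / (n:ℝ)) * (Xhᵀ.mulVec ((Xh - X).mulVec β₀)) j
          = (1 / (n:ℝ)) * (Xhᵀ.mulVec w) j := by
        rw [h1]
        simp [Pi.sub_apply]
        ring
      rw [h3] at h2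
      have h4 : |(Xhᵀ.mulVec w) j| = (n:ℝ) * |(1 / (n:ℝ)) * (Xhᵀ.mulVec w) j| := by
        rw [abs_mul, abs_of_nonneg (by positivity : (0:ℝ) ≤ 1 / (n:ℝ))]
        field_simp
      rw [h4]
      exact mul_le_mul_of_nonneg_left h2 hn'.le
    have hsplit : L1S + L1Sc = ∑ j, |δ j| := Finset.sum_add_sum_compl S _
    rw [hIeq, hsplit, Finset.mul_sum]
    refine Finset.sum_le_sum fun j _ => ?_
    calc (Xhᵀ.mulVec w) j * δ j ≤ |(Xhᵀ.mulVec w) j * δ j| := le_abs_self _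
      _ = |(Xhᵀ.mulVec w) j| * |δ j| := abs_mul _ _
      _ ≤ (n * (μ / 2)) * |δ j| := mul_le_mul_of_nonneg_right (hXj j) (abs_nonneg _)
  -- bound on N0 - Nh
  have hNbound : N0 - Nh ≤ L1S - L1Sc := by
    have hN0eq : N0 = ∑ j ∈ S, |β₀ j| := by
      rw [hN0]
      refine (Finset.sum_subset S.subset_univ fun j _ hj => ?_).symm
      have : β₀ j = 0 := by
        by_contra hcon
        exact hj ((hS j).mpr hcon)
      simp [this]
    have hNheq : Nh = (∑ j ∈ S, |βh j|) + ∑ j ∈ Sᶜ, |βh j| := by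
      rw [hNh, Finset.sum_add_sum_compl]
    have hout : ∀ j ∈ Sᶜ, |βh j| = |δ j| := by
      intro j hj
      have hj0 : β₀ j = 0 := by
        by_contra hcon
        exact (Finset.mem_compl.mp hj) ((hS j).mpr hcon)
      rw [hδa j, hj0, sub_zero]
    have hin : ∀ j ∈ S, |β₀ j| - |βh j| ≤ |δ j| := by
      intro j _
      rw [hδa j, abs_sub_comm]
      exact abs_sub_abs_le_abs_sub _ _
    have hScEq : (∑ j ∈ Sᶜ, |βh j|) = L1Sc := Finset.sum_congr rfl hout
    have hSdiff : (∑ j ∈ S, |β₀ j|) - (∑ j ∈ S, |βh j|) ≤ L1S := by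
      rw [← Finset.sum_sub_distrib]
      exact Finset.sum_le_sum hin
    rw [hN0eq, hNheq, hScEq]
    linarith
  -- key inequality
  have hkey : A ≤ n * μ * (3 * L1S - L1Sc) := by
    have h1 : 2 * (n:ℝ) * μ * (N0 - Nh) ≤ 2 * n * μ * (L1S - L1Sc) :=
      mul_le_mul_of_nonneg_left hNbound (by positivity)
    nlinarith [hbasic, hIbound]
  -- cone condition
  have hcone : L1Sc ≤ 3 * L1S := by
    have h0 : (0:ℝ) ≤ (n:ℝ) * μ * (3 * L1S - L1Sc) := le_trans hAnn hkey
    nlinarith [mul_pos hn' hμ]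
  -- restricted eigenvalue
  set a2 : ℝ := ∑ i ∈ S, (δ i) ^ 2 with ha2
  have hre := hRE S δ (le_of_eq hs) hcone
  -- Cauchy–Schwarz : L1S ≤ √s * √a2
  have hCS : L1S ≤ Real.sqrt s * Real.sqrt a2 := by
    have h1 : L1S ^ 2 ≤ (s:ℝ) * a2 := by
      have := Finset.sum_mul_sq_le_sq_mul_sq S (fun _ => (1:ℝ)) (fun i => |δ i|)
      simpa [hs, sq_abs, one_mul, ha2, hL1S] using this
    calc L1S = Real.sqrt (L1S ^ 2) := (Real.sqrt_sq hL1Snn).symm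
      _ ≤ Real.sqrt ((s:ℝ) * a2) := Real.sqrt_le_sqrt h1
      _ = Real.sqrt s * Real.sqrt a2 := Real.sqrt_mul (by positivity) _
  -- abbreviate square roots
  set t : ℝ := Real.sqrt A with ht
  set u : ℝ := Real.sqrt a2 with hu
  set q : ℝ := Real.sqrt s with hq
  set rn : ℝ := Real.sqrt n with hrn
  have htnn : 0 ≤ t := Real.sqrt_nonneg _
  have hunn : 0 ≤ u := Real.sqrt_nonneg _
  have hqnn : 0 ≤ q := Real.sqrt_nonneg _
  have hrpos : 0 < rn := Real.sqrt_pos.mpr hn'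
  have hAt : A = t ^ 2 := (Real.sq_sqrt hAnn).symm
  have hnr : (n:ℝ) = rn ^ 2 := (Real.sq_sqrt hn'.le).symm
  have hsq : (s:ℝ) = q ^ 2 := (Real.sq_sqrt (by positivity)).symm
  -- hre : (κ₂/2) * rn * u ≤ t
  -- combine: t^2 ≤ 3 * rn^2 * μ * q * u
  have hmain : t ^ 2 ≤ 3 * rn ^ 2 * μ * q * u := by
    have h1 : A ≤ n * μ * (3 * L1S) := by
      nlinarith [hkey, mul_pos hn' hμ]
    have h2 : (n:ℝ) * μ * (3 * L1S) ≤ n * μ * (3 * (q * u)) := by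
      have : 3 * L1S ≤ 3 * (q * u) := by linarith [hCS]
      exact mul_le_mul_of_nonneg_left this (by positivity)
    rw [hAt] at h1
    calc t ^ 2 ≤ (n:ℝ) * μ * (3 * (q * u)) := le_trans h1 h2
      _ = 3 * rn ^ 2 * μ * q * u := by rw [hnr]; ring
  -- κ₂ * t ≤ 6 * rn * μ * q
  have hkt : κ₂ * t ≤ 6 * rn * μ * q := by
    have h1 : κ₂ * t ^ 2 ≤ 6 * rn * μ * q * t := by
      have ha : κ₂ * t ^ 2 ≤ κ₂ * (3 * rn ^ 2 * μ * q * u) :=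
        mul_le_mul_of_nonneg_left hmain hκ₂.le
      have hb : 6 * rn * μ * q * ((κ₂ / 2) * rn * u) ≤ 6 * rn * μ * q * t :=
        mul_le_mul_of_nonneg_left hre (by positivity)
      have hc : κ₂ * (3 * rn ^ 2 * μ * q * u) = 6 * rn * μ * q * ((κ₂ / 2) * rn * u) := by ring
      linarith
    rcases eq_or_lt_of_le htnn with h | h
    · rw [← h, mul_zero]
      positivity
    · have h2 : κ₂ * t * t ≤ 6 * rn * μ * q * t := by
        calc κ₂ * t * t = κ₂ * t ^ 2 := by ring
          _ ≤ 6 * rn * μ * q * t := h1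
      exact le_of_mul_le_mul_right h2 h
  -- κ₂^2 * u ≤ 12 * μ * q
  have hku : κ₂ ^ 2 * u ≤ 12 * μ * q := by
    have h1 : κ₂ * ((κ₂ / 2) * rn * u) ≤ κ₂ * t := mul_le_mul_of_nonneg_left hre hκ₂.le
    have h2 : κ₂ * ((κ₂ / 2) * rn * u) ≤ 6 * rn * μ * q := le_trans h1 hkt
    have h3 : rn * (κ₂ ^ 2 * u) ≤ rn * (12 * μ * q) := by nlinarith
    exact le_of_mul_le_mul_left h3 hrpos
  constructor
  · -- prediction bound
    have h1 : κ₂ ^ 2 * A ≤ 36 * n * s * μ ^ 2 := by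
      have := mul_le_mul hkt hkt (by positivity) (by positivity)
      rw [hAt, hnr, hsq]
      nlinarith [this]
    rw [show (64 / κ₂ ^ 2) * (n:ℝ) * (s:ℝ) * μ ^ 2 = (64 * n * s * μ ^ 2) / κ₂ ^ 2 by ring,
      le_div_iff₀ (by positivity : (0:ℝ) < κ₂ ^ 2)]
    nlinarith [h1, mul_pos (mul_pos hn' hμ) hμ, sq_nonneg μ,
      mul_nonneg (mul_nonneg hn'.le (Nat.cast_nonneg s : (0:ℝ) ≤ s)) (sq_nonneg μ)]
  · -- estimation bound
    have hgoal : (∑ j, |βh j - β₀ j|) = L1S + L1Sc := by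
      rw [hL1S, hL1Sc, Finset.sum_add_sum_compl]
      exact Finset.sum_congr rfl fun j _ => by rw [hδa j]
    rw [hgoal]
    have h1 : κ₂ ^ 2 * (L1S + L1Sc) ≤ 48 * s * μ := by
      have h2 : L1S + L1Sc ≤ 4 * L1S := by linarith
      have h3 : κ₂ ^ 2 * (L1S + L1Sc) ≤ κ₂ ^ 2 * (4 * L1S) :=
        mul_le_mul_of_nonneg_left h2 (by positivity)
      have h4 : κ₂ ^ 2 * (4 * L1S) ≤ κ₂ ^ 2 * (4 * (q * u)) := by
        have : 4 * L1S ≤ 4 * (q * u) := by linarith [hCS]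
        exact mul_le_mul_of_nonneg_left this (by positivity)
      have h5 : 4 * q * (κ₂ ^ 2 * u) ≤ 4 * q * (12 * μ * q) :=
        mul_le_mul_of_nonneg_left hku (by positivity)
      have h6 : 4 * q * (12 * μ * q) = 48 * (q ^ 2) * μ := by ring
      rw [hsq]
      nlinarith [h3, h4, h5]
    rw [show (64 / κ₂ ^ 2) * (s:ℝ) * μ = (64 * s * μ) / κ₂ ^ 2 by ring,
      le_div_iff₀ (by positivity : (0:ℝ) < κ₂ ^ 2)]
    nlinarith [h1, mul_nonneg (Nat.cast_nonneg s : (0:ℝ) ≤ s) hμ.le]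
end

section
/- Let Ĉ, C be p×p symmetric matrices and S ⊂ {1,...,p} with C_{SS} invertible, ‖(C_{SS})⁻¹‖_∞ ≤ φ, and ‖C_{S^cS}(C_{SS})⁻¹‖_∞ ≤ 1 − α for some 0 < α ≤ 1. If φ‖Ĉ_{SS} − C_{SS}‖_∞ ≤ α/(4−α) and φ‖Ĉ_{S^cS} − C_{S^cS}‖_∞ ≤ α/(4−α), then Ĉ_{SS} is invertible, ‖(Ĉ_{SS})⁻¹‖_∞ ≤ ((4−α)/(2(2−α)))φ, and ‖Ĉ_{S^cS}(Ĉ_{SS})⁻¹‖_∞ ≤ 1 − α/2. -/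
open Finset Matrix

namespace Stmt8Aux

attribute [local instance] Matrix.linftyOpNormedAddCommGroup Matrix.linftyOpNormedRing
  Matrix.linftyOpNormedSpace

variable {m n : Type*} [Fintype m] [Fintype n]

theorem rowsum_le_norm (A : Matrix m n ℝ) (i : m) : ∑ j, |A i j| ≤ ‖A‖ := by
  rw [Matrix.linfty_opNorm_def]
  have h : (∑ j, ‖A i j‖₊) ≤ (Finset.univ : Finset m).sup fun i => ∑ j, ‖A i j‖₊ :=
    Finset.le_sup (f := fun i => ∑ j, ‖A i j‖₊) (Finset.mem_univ i)
  calc ∑ j, |A i j| = ((∑ j, ‖A i j‖₊ : NNReal) : ℝ) := by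
        push_cast [Real.nnnorm_abs]
        simp [Real.norm_eq_abs]
    _ ≤ _ := by exact_mod_cast h

theorem norm_le_of_rowsum (A : Matrix m n ℝ) (c : ℝ) (hc : 0 ≤ c)
    (h : ∀ i, ∑ j, |A i j| ≤ c) : ‖A‖ ≤ c := by
  rw [Matrix.linfty_opNorm_def]
  have : ((Finset.univ : Finset m).sup fun i => ∑ j, ‖A i j‖₊) ≤ c.toNNReal := by
    apply Finset.sup_le
    intro i _
    rw [← NNReal.coe_le_coe]
    calc ((∑ j, ‖A i j‖₊ : NNReal) : ℝ) = ∑ j, |A i j| := by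
          push_cast
          simp [Real.norm_eq_abs]
      _ ≤ c := h i
      _ = c.toNNReal := (Real.coe_toNNReal c hc).symm
  calc ((Finset.univ.sup fun i => ∑ j, ‖A i j‖₊ : NNReal) : ℝ)
      ≤ (c.toNNReal : ℝ) := by exact_mod_cast this
    _ = c := Real.coe_toNNReal c hc

/-- scaled norm bound from scaled row sums -/
theorem smul_norm_le_of_rowsum (A : Matrix m n ℝ) (φ c : ℝ) (hφ : 0 ≤ φ) (hc : 0 ≤ c)
    (h : ∀ i, φ * ∑ j, |A i j| ≤ c) : φ * ‖A‖ ≤ c := by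
  have h1 : ‖φ • A‖ ≤ c := by
    apply norm_le_of_rowsum _ _ hc
    intro i
    calc ∑ j, |(φ • A) i j| = φ * ∑ j, |A i j| := by
          rw [Finset.mul_sum]
          refine Finset.sum_congr rfl fun j _ => ?_
          simp [Matrix.smul_apply, abs_mul, abs_of_nonneg hφ]
      _ ≤ c := h i
  calc φ * ‖A‖ = ‖φ • A‖ := by rw [norm_smul, Real.norm_eq_abs, abs_of_nonneg hφ]
    _ ≤ c := h1
end Stmt8Aux

open Stmt8Aux

set_option maxHeartbeats 1000000 in
/-- Lemma A.3: stability of the irrepresentability condition under Gram perturbation.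
If `‖(C_SS)⁻¹‖_∞ ≤ φ`, `‖C_{SᶜS}(C_SS)⁻¹‖_∞ ≤ 1 − α`, and the submatrix perturbations
satisfy `φ‖Ĉ_SS − C_SS‖_∞ ≤ α/(4−α)` and `φ‖Ĉ_{SᶜS} − C_{SᶜS}‖_∞ ≤ α/(4−α)`, then
`Ĉ_SS` is invertible, `‖(Ĉ_SS)⁻¹‖_∞ ≤ ((4−α)/(2(2−α)))φ`, and
`‖Ĉ_{SᶜS}(Ĉ_SS)⁻¹‖_∞ ≤ 1 − α/2`. -/
theorem stmt8 (p : ℕ) (Ch C : Matrix (Fin p) (Fin p) ℝ)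
    (hChsym : Ch.IsSymm) (hCsym : C.IsSymm)
    (S : Finset (Fin p)) (φ α : ℝ) (hφ : 0 ≤ φ) (hα0 : 0 < α) (hα1 : α ≤ 1)
    (CSS : Matrix {i // i ∈ S} {i // i ∈ S} ℝ)
    (hCSS : ∀ i j, CSS i j = C i.1 j.1)
    (ChSS : Matrix {i // i ∈ S} {i // i ∈ S} ℝ)
    (hChSS : ∀ i j, ChSS i j = Ch i.1 j.1)
    (CScS : Matrix {i // i ∉ S} {i // i ∈ S} ℝ)
    (hCScS : ∀ i j, CScS i j = C i.1 j.1)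
    (ChScS : Matrix {i // i ∉ S} {i // i ∈ S} ℝ)
    (hChScS : ∀ i j, ChScS i j = Ch i.1 j.1)
    (hinv : IsUnit CSS.det)
    (hCinv : ∀ i, ∑ j, |CSS⁻¹ i j| ≤ φ)
    (hirr : ∀ i, ∑ j, |(CScS * CSS⁻¹) i j| ≤ 1 - α)
    (hpert1 : ∀ i, φ * (∑ j, |ChSS i j - CSS i j|) ≤ α / (4 - α))
    (hpert2 : ∀ i, φ * (∑ j, |ChScS i j - CScS i j|) ≤ α / (4 - α)) :
    IsUnit ChSS.det ∧
      (∀ i, ∑ j, |ChSS⁻¹ i j| ≤ ((4 - α) / (2 * (2 - α))) * φ) ∧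
      (∀ i, ∑ j, |(ChScS * ChSS⁻¹) i j| ≤ 1 - α / 2) := by
  letI : NormedAddCommGroup (Matrix {i // i ∈ S} {i // i ∈ S} ℝ) :=
    Matrix.linftyOpNormedAddCommGroup
  letI : NormedRing (Matrix {i // i ∈ S} {i // i ∈ S} ℝ) := Matrix.linftyOpNormedRing
  letI : NormedAddCommGroup (Matrix {i // i ∉ S} {i // i ∈ S} ℝ) :=
    Matrix.linftyOpNormedAddCommGroup
  haveI : CompleteSpace (Matrix {i // i ∈ S} {i // i ∈ S} ℝ) :=
    FiniteDimensional.complete ℝ _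
  haveI : HasSummableGeomSeries (Matrix {i // i ∈ S} {i // i ∈ S} ℝ) := by
    have hc : @CompleteSpace (Matrix {i // i ∈ S} {i // i ∈ S} ℝ)
        (NormedRing.toMetricSpace (α := Matrix {i // i ∈ S} {i // i ∈ S} ℝ)).toUniformSpace :=
      ‹CompleteSpace (Matrix {i // i ∈ S} {i // i ∈ S} ℝ)›
    infer_instance
  set ρ : ℝ := α / (4 - α) with hρdef
  have h4α : (0:ℝ) < 4 - α := by linarith
  have h2α : (0:ℝ) < 2 - α := by linarith
  have hρ0 : 0 ≤ ρ := div_nonneg hα0.le h4α.le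
  have hρ1 : ρ < 1 := by
    rw [div_lt_one h4α]; linarith
  set Δ₁ := ChSS - CSS with hΔ₁
  set Δ₂ := ChScS - CScS with hΔ₂
  have hCeq : ChSS = CSS + Δ₁ := by rw [hΔ₁]; abel
  have hnΔ1 : φ * ‖Δ₁‖ ≤ ρ :=
    smul_norm_le_of_rowsum _ _ _ hφ hρ0 (fun i => by simpa [hΔ₁] using hpert1 i)
  have hnΔ2 : φ * ‖Δ₂‖ ≤ ρ :=
    smul_norm_le_of_rowsum _ _ _ hφ hρ0 (fun i => by simpa [hΔ₂] using hpert2 i)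
  have hCiN : ‖(CSS⁻¹ : Matrix _ _ ℝ)‖ ≤ φ := norm_le_of_rowsum _ _ hφ hCinv
  have hT : ‖CSS⁻¹ * Δ₁‖ ≤ ρ := by
    calc ‖CSS⁻¹ * Δ₁‖ ≤ ‖(CSS⁻¹ : Matrix _ _ ℝ)‖ * ‖Δ₁‖ := norm_mul_le _ _
      _ ≤ φ * ‖Δ₁‖ := mul_le_mul_of_nonneg_right hCiN (norm_nonneg _)
      _ ≤ ρ := hnΔ1
  -- invertibility of 1 + CSS⁻¹ * Δ₁
  have hTlt : ‖-(CSS⁻¹ * Δ₁)‖ < 1 := by rw [norm_neg]; exact lt_of_le_of_lt hT hρ1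
  have hu : IsUnit (1 + CSS⁻¹ * Δ₁) := by
    have : IsUnit (1 - -(CSS⁻¹ * Δ₁)) := ⟨Units.oneSub _ hTlt, rfl⟩
    rwa [sub_neg_eq_add] at this
  have hCC : CSS * CSS⁻¹ = 1 := Matrix.mul_nonsing_inv _ hinv
  have hCC' : CSS⁻¹ * CSS = 1 := Matrix.nonsing_inv_mul _ hinv
  have hfact : ChSS = CSS * (1 + CSS⁻¹ * Δ₁) := by
    rw [mul_add, mul_one, ← mul_assoc, hCC, one_mul, hCeq]
  have hChunit : IsUnit ChSS := by
    rw [hfact]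
    exact ((Matrix.isUnit_iff_isUnit_det _).mpr hinv).mul hu
  have hdet : IsUnit ChSS.det := (Matrix.isUnit_iff_isUnit_det _).mp hChunit
  have hB : ChSS * ChSS⁻¹ = 1 := Matrix.mul_nonsing_inv _ hdet
  -- key identity
  have hkey : (ChSS⁻¹ : Matrix _ _ ℝ) = CSS⁻¹ - CSS⁻¹ * Δ₁ * ChSS⁻¹ := by
    have h1 : CSS⁻¹ * ChSS = 1 + CSS⁻¹ * Δ₁ := by
      rw [hCeq, mul_add, hCC']
    have h2 : (CSS⁻¹ : Matrix _ _ ℝ) = (1 + CSS⁻¹ * Δ₁) * ChSS⁻¹ := by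
      calc (CSS⁻¹ : Matrix _ _ ℝ) = CSS⁻¹ * (ChSS * ChSS⁻¹) := by rw [hB, mul_one]
        _ = (CSS⁻¹ * ChSS) * ChSS⁻¹ := by rw [mul_assoc]
        _ = (1 + CSS⁻¹ * Δ₁) * ChSS⁻¹ := by rw [h1]
    rw [add_mul, one_mul] at h2
    exact eq_sub_of_add_eq h2.symm
  -- norm bound for ChSS⁻¹
  set K : ℝ := (4 - α) / (2 * (2 - α)) with hK
  have hK0 : 0 ≤ K := div_nonneg h4α.le (by linarith)
  have hnB : ‖(ChSS⁻¹ : Matrix _ _ ℝ)‖ ≤ K * φ := by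
    have hb : ‖(ChSS⁻¹ : Matrix _ _ ℝ)‖ ≤ φ + ρ * ‖(ChSS⁻¹ : Matrix _ _ ℝ)‖ := by
      calc ‖(ChSS⁻¹ : Matrix _ _ ℝ)‖ = ‖CSS⁻¹ - CSS⁻¹ * Δ₁ * ChSS⁻¹‖ := by rw [← hkey]
        _ ≤ ‖(CSS⁻¹ : Matrix _ _ ℝ)‖ + ‖CSS⁻¹ * Δ₁ * ChSS⁻¹‖ := norm_sub_le _ _
        _ ≤ φ + ‖CSS⁻¹ * Δ₁‖ * ‖(ChSS⁻¹ : Matrix _ _ ℝ)‖ :=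
            add_le_add hCiN (norm_mul_le _ _)
        _ ≤ φ + ρ * ‖(ChSS⁻¹ : Matrix _ _ ℝ)‖ := by
            have := mul_le_mul_of_nonneg_right hT (norm_nonneg (ChSS⁻¹ : Matrix _ _ ℝ))
            linarith
    set b := ‖(ChSS⁻¹ : Matrix _ _ ℝ)‖ with hbdef
    have hb0 : 0 ≤ b := norm_nonneg _
    rw [hK]
    rw [div_mul_eq_mul_div, le_div_iff₀ (by linarith : (0:ℝ) < 2 * (2 - α))]
    have hρb : ρ * b = α * b / (4 - α) := by rw [hρdef]; ring
    have h3 : b * (4 - α) ≤ (φ + ρ * b) * (4 - α) :=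
      mul_le_mul_of_nonneg_right hb h4α.le
    rw [hρb] at h3
    have h4 : α * b / (4 - α) * (4 - α) = α * b := by field_simp
    nlinarith [h3, h4]
  -- irrepresentability norms
  have hirrN : ‖CScS * CSS⁻¹‖ ≤ 1 - α := norm_le_of_rowsum _ _ (by linarith) hirr
  -- product bounds
  have hΔ1B : ‖Δ₁‖ * ‖(ChSS⁻¹ : Matrix _ _ ℝ)‖ ≤ K * ρ := by
    calc ‖Δ₁‖ * ‖(ChSS⁻¹ : Matrix _ _ ℝ)‖ ≤ ‖Δ₁‖ * (K * φ) :=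
          mul_le_mul_of_nonneg_left hnB (norm_nonneg _)
      _ = K * (φ * ‖Δ₁‖) := by ring
      _ ≤ K * ρ := mul_le_mul_of_nonneg_left hnΔ1 hK0
  have hΔ2B : ‖Δ₂‖ * ‖(ChSS⁻¹ : Matrix _ _ ℝ)‖ ≤ K * ρ := by
    calc ‖Δ₂‖ * ‖(ChSS⁻¹ : Matrix _ _ ℝ)‖ ≤ ‖Δ₂‖ * (K * φ) :=
          mul_le_mul_of_nonneg_left hnB (norm_nonneg _)
      _ = K * (φ * ‖Δ₂‖) := by ring
      _ ≤ K * ρ := mul_le_mul_of_nonneg_left hnΔ2 hK0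
  have hKρ : K * ρ = α / (2 * (2 - α)) := by
    rw [hK, hρdef]; field_simp
  -- identity for the offdiagonal product
  have hkey2 : ChScS * ChSS⁻¹
      = CScS * CSS⁻¹ + Δ₂ * ChSS⁻¹ - (CScS * CSS⁻¹) * (Δ₁ * ChSS⁻¹) := by
    have h5 : ChScS = CScS + Δ₂ := by rw [hΔ₂]; abel
    have h6 : CScS * ChSS⁻¹ = CScS * CSS⁻¹ - (CScS * CSS⁻¹) * (Δ₁ * ChSS⁻¹) := by
      nth_rewrite 1 [hkey]
      rw [Matrix.mul_sub]
      simp [Matrix.mul_assoc]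
    rw [h5, Matrix.add_mul, h6]
    abel
  have hthird : ‖ChScS * ChSS⁻¹‖ ≤ 1 - α / 2 := by
    have hb1 : ‖Δ₂ * ChSS⁻¹‖ ≤ K * ρ := le_trans (Matrix.linfty_opNorm_mul _ _) hΔ2B
    have hb2 : ‖(CScS * CSS⁻¹) * (Δ₁ * ChSS⁻¹)‖ ≤ (1 - α) * (K * ρ) := by
      calc ‖(CScS * CSS⁻¹) * (Δ₁ * ChSS⁻¹)‖ ≤ ‖CScS * CSS⁻¹‖ * ‖Δ₁ * ChSS⁻¹‖ :=
            Matrix.linfty_opNorm_mul _ _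
        _ ≤ (1 - α) * (K * ρ) := by
            have hΔ1B' : ‖Δ₁ * ChSS⁻¹‖ ≤ K * ρ := le_trans (norm_mul_le _ _) hΔ1B
            exact mul_le_mul hirrN hΔ1B' (norm_nonneg _) (by linarith)
    have := norm_sub_le (CScS * CSS⁻¹ + Δ₂ * ChSS⁻¹) ((CScS * CSS⁻¹) * (Δ₁ * ChSS⁻¹))
    have hadd := norm_add_le (CScS * CSS⁻¹) (Δ₂ * ChSS⁻¹)
    rw [hkey2]
    have hfin : ‖CScS * CSS⁻¹‖ + ‖Δ₂ * ChSS⁻¹‖ + ‖(CScS * CSS⁻¹) * (Δ₁ * ChSS⁻¹)‖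
        ≤ 1 - α / 2 := by
      have hKρval : K * ρ = α / (2 * (2 - α)) := hKρ
      have h6 : (1 - α) + K * ρ + (1 - α) * (K * ρ) = 1 - α / 2 := by
        rw [hKρval]
        field_simp
        ring
      have h8 : ‖(CScS * CSS⁻¹) * (Δ₁ * ChSS⁻¹)‖ ≤ (1 - α) * (K * ρ) := hb2
      linarith [hb1, hirrN, h8]
    linarith [this, hadd]
  refine ⟨hdet, fun i => le_trans (rowsum_le_norm _ i) hnB,
    fun i => le_trans (rowsum_le_norm _ i) hthird⟩
end

section
/- Suppose Ĉ_{SS} = n⁻¹X̂_SᵀX̂_S is invertible with ‖(Ĉ_{SS})⁻¹‖_∞ ≤ ((4−α)/(2(2−α)))φ, the noise condition ‖n⁻¹X̂ᵀη − n⁻¹X̂ᵀ(X̂−X)β₀‖_∞ ≤ (α/(4−α))μ holds, and β̂_S is defined by β̂_S − β₀_S = (Ĉ_{SS})⁻¹{n⁻¹X̂_Sᵀη − n⁻¹X̂_Sᵀ(X̂_S − X_S)β₀_S − μ sgn(β₀_S)}. Then ‖β̂_S − β₀_S‖_∞ ≤ (2/(2−α))φμ; consequently, if min_{j∈S}|β₀_j|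 > (2/(2−α))φμ, then sgn(β̂_S) = sgn(β₀_S). -/
open Finset Matrix

/-- Sign-consistency step in the proof of Theorem 3: if `Ĉ_SS = n⁻¹X̂_SᵀX̂_S` is invertible
with `‖(Ĉ_SS)⁻¹‖_∞ ≤ ((4−α)/(2(2−α)))φ`, the noise condition
`‖n⁻¹X̂ᵀη − n⁻¹X̂ᵀ(X̂−X)β₀‖_∞ ≤ (α/(4−α))μ` holds, and `β̂_S` is given by the closed-form
expression, then `‖β̂_S − β₀_S‖_∞ ≤ (2/(2−α))φμ`; if moreover `min_{j∈S}|β₀ⱼ| > (2/(2−α))φμ`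
then `sgn(β̂_S) = sgn(β₀_S)`. -/
theorem stmt9 (n p : ℕ) (hn : 0 < n)
    (X Xh : Matrix (Fin n) (Fin p) ℝ) (η : Fin n → ℝ) (β₀ : Fin p → ℝ)
    (μ φ α : ℝ) (hμ : 0 < μ) (hφ : 0 ≤ φ) (hα0 : 0 < α) (hα1 : α ≤ 1)
    (S : Finset (Fin p)) (hS : ∀ j, j ∈ S ↔ β₀ j ≠ 0)
    (ChSS : Matrix {i // i ∈ S} {i // i ∈ S} ℝ)
    (hChSS : ∀ i j, ChSS i j = (1 / (n : ℝ)) * ∑ r, Xh r i.1 * Xh r j.1)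
    (ChSSinv : Matrix {i // i ∈ S} {i // i ∈ S} ℝ)
    (hinv₁ : ChSSinv * ChSS = 1) (hinv₂ : ChSS * ChSSinv = 1)
    (hCinv : ∀ i, ∑ j, |ChSSinv i j| ≤ ((4 - α) / (2 * (2 - α))) * φ)
    (hnoise : ∀ j : Fin p,
      |(1 / (n : ℝ)) * (Xhᵀ.mulVec η) j -
        (1 / (n : ℝ)) * (Xhᵀ.mulVec ((Xh - X).mulVec β₀)) j| ≤ (α / (4 - α)) * μ)
    (βhS : {i // i ∈ S} → ℝ)
    (hβhS : ∀ i : {i // i ∈ S}, βhS i - β₀ i.1 =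
      ∑ j : {i // i ∈ S}, ChSSinv i j *
        ((1 / (n : ℝ)) * (∑ r, Xh r j.1 * η r) -
          (1 / (n : ℝ)) * (∑ r, Xh r j.1 * ∑ k ∈ S, (Xh r k - X r k) * β₀ k) -
          μ * Real.sign (β₀ j.1))) :
    (∀ i : {i // i ∈ S}, |βhS i - β₀ i.1| ≤ (2 / (2 - α)) * φ * μ) ∧
      ((∀ j ∈ S, (2 / (2 - α)) * φ * μ < |β₀ j|) →
        ∀ i : {i // i ∈ S}, Real.sign (βhS i) = Real.sign (β₀ i.1)) := by
  have h2α : (0:ℝ) < 2 - α := by linarith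
  have h4α : (0:ℝ) < 4 - α := by linarith
  -- bound on each bracket term
  have hterm : ∀ j : {i // i ∈ S},
      |(1 / (n : ℝ)) * (∑ r, Xh r j.1 * η r) -
        (1 / (n : ℝ)) * (∑ r, Xh r j.1 * ∑ k ∈ S, (Xh r k - X r k) * β₀ k) -
        μ * Real.sign (β₀ j.1)| ≤ (4 / (4 - α)) * μ := by
    intro j
    have hsumS : ∀ r, (∑ k ∈ S, (Xh r k - X r k) * β₀ k) =
        ∑ k, (Xh r k - X r k) * β₀ k := by
      intro r
      refine Finset.sum_subset (Finset.subset_univ S) ?_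
      intro k _ hk
      have : β₀ k = 0 := by
        by_contra h
        exact hk ((hS k).mpr h)
      simp [this]
    have h1 : (Xhᵀ.mulVec η) j.1 = ∑ r, Xh r j.1 * η r := by
      simp [Matrix.mulVec, dotProduct, Matrix.transpose_apply]
    have h2 : (Xhᵀ.mulVec ((Xh - X).mulVec β₀)) j.1 =
        ∑ r, Xh r j.1 * ∑ k ∈ S, (Xh r k - X r k) * β₀ k := by
      simp only [Matrix.mulVec, dotProduct, Matrix.transpose_apply,
        Matrix.sub_apply]
      exact Finset.sum_congr rfl fun r _ => by rw [hsumS r]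
    have hn' := hnoise j.1
    rw [h1, h2] at hn'
    have hsign : |Real.sign (β₀ j.1)| ≤ 1 := by
      rcases Real.sign_apply_eq (β₀ j.1) with h | h | h <;> rw [h] <;> norm_num
    calc |(1 / (n : ℝ)) * (∑ r, Xh r j.1 * η r) -
          (1 / (n : ℝ)) * (∑ r, Xh r j.1 * ∑ k ∈ S, (Xh r k - X r k) * β₀ k) -
          μ * Real.sign (β₀ j.1)|
        ≤ |(1 / (n : ℝ)) * (∑ r, Xh r j.1 * η r) -
            (1 / (n : ℝ)) * (∑ r, Xh r j.1 * ∑ k ∈ S, (Xh r k - X r k) * β₀ k)| +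
          |μ * Real.sign (β₀ j.1)| := abs_sub _ _
      _ ≤ (α / (4 - α)) * μ + μ := by
          have : |μ * Real.sign (β₀ j.1)| = μ * |Real.sign (β₀ j.1)| := by
            rw [abs_mul, abs_of_pos hμ]
          rw [this]
          have := mul_le_mul_of_nonneg_left hsign hμ.le
          linarith
      _ = (4 / (4 - α)) * μ := by field_simp; ring
  have key : ∀ i : {i // i ∈ S}, |βhS i - β₀ i.1| ≤ (2 / (2 - α)) * φ * μ := by
    intro i
    rw [hβhS i]
    calc |∑ j : {i // i ∈ S}, ChSSinv i j *
          ((1 / (n : ℝ)) * (∑ r, Xh r j.1 * η r) -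
            (1 / (n : ℝ)) * (∑ r, Xh r j.1 * ∑ k ∈ S, (Xh r k - X r k) * β₀ k) -
            μ * Real.sign (β₀ j.1))|
        ≤ ∑ j : {i // i ∈ S}, |ChSSinv i j| * ((4 / (4 - α)) * μ) := by
          refine (Finset.abs_sum_le_sum_abs _ _).trans (Finset.sum_le_sum ?_)
          intro j _
          rw [abs_mul]
          exact mul_le_mul_of_nonneg_left (hterm j) (abs_nonneg _)
      _ = (∑ j : {i // i ∈ S}, |ChSSinv i j|) * ((4 / (4 - α)) * μ) := by
          rw [Finset.sum_mul]
      _ ≤ (((4 - α) / (2 * (2 - α))) * φ) * ((4 / (4 - α)) * μ) := by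
          refine mul_le_mul_of_nonneg_right (hCinv i) ?_
          positivity
      _ = (2 / (2 - α)) * φ * μ := by field_simp; ring
  refine ⟨key, fun hmin i => ?_⟩
  have hi := key i
  have hb := hmin i.1 i.2
  rcases lt_trichotomy (β₀ i.1) 0 with h | h | h
  · have habs : |β₀ i.1| = -(β₀ i.1) := abs_of_neg h
    have : βhS i < 0 := by
      have := abs_le.mp hi
      linarith [this.1, hb, habs ▸ hb]
    rw [Real.sign_of_neg this, Real.sign_of_neg h]
  · exact absurd h ((hS i.1).mp i.2)
  · have habs : |β₀ i.1| = β₀ i.1 := abs_of_pos h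
    have : 0 < βhS i := by
      have := abs_le.mp hi
      rw [habs] at hb
      linarith [this.2]
    rw [Real.sign_of_pos this, Real.sign_of_pos h]
end

section
/- In the setting of the previous statement, assume additionally ‖Ĉ_{S^cS}(Ĉ_{SS})⁻¹‖_∞ ≤ 1 − α/2 where Ĉ = n⁻¹X̂ᵀX̂. Then the vector β̂ with β̂_{S^c} = 0 and β̂_S as defined above satisfies ‖n⁻¹X̂_{S^c}ᵀ(y − X̂β̂)‖_∞ ≤ μ, i.e., the Lasso KKT dual-feasibility condition on S^c holds. -/
open Finset Matrix

/-- KKT dual-feasibility step in the proof of Theorem 3: in the setting of the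
sign-consistency step, assuming additionally the perturbed irrepresentability bound
`‖Ĉ_{SᶜS}(Ĉ_SS)⁻¹‖_∞ ≤ 1 − α/2`, the vector `β̂` with `β̂_{Sᶜ} = 0` and `β̂_S` given by the
closed-form expression satisfies `‖n⁻¹X̂_{Sᶜ}ᵀ(y − X̂β̂)‖_∞ ≤ μ`. -/
theorem stmt10 (n p : ℕ) (hn : 0 < n)
    (X Xh : Matrix (Fin n) (Fin p) ℝ) (η : Fin n → ℝ) (β₀ : Fin p → ℝ)
    (μ φ α : ℝ) (hμ : 0 < μ) (hφ : 0 ≤ φ) (hα0 : 0 < α) (hα1 : α ≤ 1)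
    (S : Finset (Fin p)) (hS : ∀ j, j ∈ S ↔ β₀ j ≠ 0)
    (ChSS : Matrix {i // i ∈ S} {i // i ∈ S} ℝ)
    (hChSS : ∀ i j, ChSS i j = (1 / (n : ℝ)) * ∑ r, Xh r i.1 * Xh r j.1)
    (ChSSinv : Matrix {i // i ∈ S} {i // i ∈ S} ℝ)
    (hinv₁ : ChSSinv * ChSS = 1) (hinv₂ : ChSS * ChSSinv = 1)
    (hCinv : ∀ i, ∑ j, |ChSSinv i j| ≤ ((4 - α) / (2 * (2 - α))) * φ)
    (hnoise : ∀ j : Fin p,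
      |(1 / (n : ℝ)) * (Xhᵀ.mulVec η) j -
        (1 / (n : ℝ)) * (Xhᵀ.mulVec ((Xh - X).mulVec β₀)) j| ≤ (α / (4 - α)) * μ)
    (βhS : {i // i ∈ S} → ℝ)
    (hβhS : ∀ i : {i // i ∈ S}, βhS i - β₀ i.1 =
      ∑ j : {i // i ∈ S}, ChSSinv i j *
        ((1 / (n : ℝ)) * (∑ r, Xh r j.1 * η r) -
          (1 / (n : ℝ)) * (∑ r, Xh r j.1 * ∑ k ∈ S, (Xh r k - X r k) * β₀ k) -
          μ * Real.sign (β₀ j.1)))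
    (ChScS : Matrix {i // i ∉ S} {i // i ∈ S} ℝ)
    (hChScS : ∀ (i : {i // i ∉ S}) (j : {i // i ∈ S}),
      ChScS i j = (1 / (n : ℝ)) * ∑ r, Xh r i.1 * Xh r j.1)
    (hirr : ∀ i, ∑ j, |(ChScS * ChSSinv) i j| ≤ 1 - α / 2)
    (y : Fin n → ℝ) (hy : y = X.mulVec β₀ + η)
    (βh : Fin p → ℝ) (hβh0 : ∀ j ∉ S, βh j = 0)
    (hβhS' : ∀ i : {i // i ∈ S}, βh i.1 = βhS i) :
    ∀ j ∉ S, |(1 / (n : ℝ)) * (Xhᵀ.mulVec (y - Xh.mulVec βh)) j| ≤ μ := by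
  intro j hj
  have h4α : (0:ℝ) < 4 - α := by linarith
  have hβ0 : ∀ k, k ∉ S → β₀ k = 0 := by
    intro k hk; by_contra h; exact hk ((hS k).mpr h)
  set e : {i // i ∈ S} → ℝ := fun m =>
    (1 / (n : ℝ)) * (∑ r, Xh r m.1 * η r) -
      (1 / (n : ℝ)) * (∑ r, Xh r m.1 * ∑ k ∈ S, (Xh r k - X r k) * β₀ k) -
      μ * Real.sign (β₀ m.1) with he
  have hrestr : ∀ r, (∑ k, (Xh r k - X r k) * β₀ k) = ∑ k ∈ S, (Xh r k - X r k) * β₀ k := by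
    intro r
    rw [← Finset.sum_subset (Finset.subset_univ S)]
    intro x _ hx
    rw [hβ0 x hx, mul_zero]
  have hnoise' : ∀ k : Fin p,
      |(1 / (n : ℝ)) * (∑ r, Xh r k * η r) -
        (1 / (n : ℝ)) * (∑ r, Xh r k * ∑ m ∈ S, (Xh r m - X r m) * β₀ m)| ≤ α / (4 - α) * μ := by
    intro k
    have h := hnoise k
    have h1 : (Xhᵀ.mulVec η) k = ∑ r, Xh r k * η r := by
      simp [Matrix.mulVec, dotProduct, Matrix.transpose_apply]
    have h2 : (Xhᵀ.mulVec ((Xh - X).mulVec β₀)) k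
        = ∑ r, Xh r k * ∑ m ∈ S, (Xh r m - X r m) * β₀ m := by
      simp only [Matrix.mulVec, dotProduct, Matrix.transpose_apply, Matrix.sub_apply]
      exact Finset.sum_congr rfl fun r _ => by rw [hrestr r]
    rwa [h1, h2] at h
  have hemax : ∀ m, |e m| ≤ α / (4 - α) * μ + μ := by
    intro m
    have h1 := hnoise' m.1
    have h2 : |μ * Real.sign (β₀ m.1)| ≤ μ := by
      rw [abs_mul, abs_of_pos hμ]
      have : |Real.sign (β₀ m.1)| ≤ 1 := by
        rcases lt_trichotomy (β₀ m.1) 0 with h | h | h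
        · simp [Real.sign_of_neg h]
        · simp [h]
        · simp [Real.sign_of_pos h]
      nlinarith
    calc |e m| ≤ |(1 / (n : ℝ)) * (∑ r, Xh r m.1 * η r) -
          (1 / (n : ℝ)) * (∑ r, Xh r m.1 * ∑ k ∈ S, (Xh r k - X r k) * β₀ k)|
          + |μ * Real.sign (β₀ m.1)| := abs_sub _ _
      _ ≤ α / (4 - α) * μ + μ := add_le_add h1 h2
  -- pointwise residual identity
  have hrow : ∀ r, (y - Xh.mulVec βh) r = η r - (∑ k ∈ S, (Xh r k - X r k) * β₀ k)
      - ∑ m : {i // i ∈ S}, Xh r m.1 * (βhS m - β₀ m.1) := by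
    intro r
    have hX : ∑ k, X r k * β₀ k = ∑ k ∈ S, X r k * β₀ k := by
      rw [← Finset.sum_subset (Finset.subset_univ S)]
      intro x _ hx; rw [hβ0 x hx, mul_zero]
    have hXh : ∑ k, Xh r k * βh k = ∑ k ∈ S, Xh r k * βh k := by
      rw [← Finset.sum_subset (Finset.subset_univ S)]
      intro x _ hx; rw [hβh0 x hx, mul_zero]
    have hsub : ∑ m : {i // i ∈ S}, Xh r m.1 * (βhS m - β₀ m.1)
        = ∑ k ∈ S, Xh r k * (βh k - β₀ k) := by
      rw [Finset.univ_eq_attach, ← Finset.sum_attach S (fun k => Xh r k * (βh k - β₀ k))]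
      exact Finset.sum_congr rfl fun m _ => by rw [hβhS' m]
    simp only [Pi.sub_apply, hy, Pi.add_apply, Matrix.mulVec, dotProduct]
    rw [hX, hXh, hsub]
    have hc : ∑ k ∈ S, (Xh r k - X r k) * β₀ k + ∑ k ∈ S, Xh r k * (βh k - β₀ k)
        = ∑ k ∈ S, Xh r k * βh k - ∑ k ∈ S, X r k * β₀ k := by
      rw [← Finset.sum_add_distrib, ← Finset.sum_sub_distrib]
      exact Finset.sum_congr rfl fun k _ => by ring
    linarith [hc]
  -- the cross term as matrix product
  have hd : ∀ m : {i // i ∈ S}, βhS m - β₀ m.1 = ∑ k : {i // i ∈ S}, ChSSinv m k * e k := hβhS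
  have key : (1 / (n : ℝ)) * (Xhᵀ.mulVec (y - Xh.mulVec βh)) j
      = ((1 / (n : ℝ)) * (∑ r, Xh r j * η r) -
          (1 / (n : ℝ)) * (∑ r, Xh r j * ∑ k ∈ S, (Xh r k - X r k) * β₀ k))
        - ∑ m : {i // i ∈ S}, (ChScS * ChSSinv) ⟨j, hj⟩ m * e m := by
    have h0 : (Xhᵀ.mulVec (y - Xh.mulVec βh)) j = ∑ r, Xh r j * (y - Xh.mulVec βh) r := by
      simp [Matrix.mulVec, dotProduct, Matrix.transpose_apply]
    rw [h0]
    have h1 : ∑ r, Xh r j * (y - Xh.mulVec βh) r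
        = (∑ r, Xh r j * η r) - (∑ r, Xh r j * ∑ k ∈ S, (Xh r k - X r k) * β₀ k)
          - ∑ r, Xh r j * ∑ m : {i // i ∈ S}, Xh r m.1 * (βhS m - β₀ m.1) := by
      rw [← Finset.sum_sub_distrib, ← Finset.sum_sub_distrib]
      exact Finset.sum_congr rfl fun r _ => by rw [hrow r]; ring
    rw [h1]
    have h2 : (1 / (n : ℝ)) * ∑ r, Xh r j * ∑ m : {i // i ∈ S}, Xh r m.1 * (βhS m - β₀ m.1)
        = ∑ m : {i // i ∈ S}, (ChScS * ChSSinv) ⟨j, hj⟩ m * e m := by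
      have h3 : (1 / (n : ℝ)) * ∑ r, Xh r j * ∑ m : {i // i ∈ S}, Xh r m.1 * (βhS m - β₀ m.1)
          = ∑ m : {i // i ∈ S}, ChScS ⟨j, hj⟩ m * (βhS m - β₀ m.1) := by
        rw [Finset.mul_sum]
        have : ∀ r, (1 / (n : ℝ)) * (Xh r j * ∑ m : {i // i ∈ S}, Xh r m.1 * (βhS m - β₀ m.1))
            = ∑ m : {i // i ∈ S}, (1 / (n : ℝ)) * (Xh r j * Xh r m.1) * (βhS m - β₀ m.1) := by
          intro r; rw [Finset.mul_sum, Finset.mul_sum]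
          exact Finset.sum_congr rfl fun m _ => by ring
        rw [Finset.sum_congr rfl fun r _ => this r, Finset.sum_comm]
        refine Finset.sum_congr rfl fun m _ => ?_
        rw [hChScS ⟨j, hj⟩ m, Finset.mul_sum, Finset.sum_mul]
      rw [h3]
      have h4 : ∀ m : {i // i ∈ S}, ChScS ⟨j, hj⟩ m * (βhS m - β₀ m.1)
          = ∑ k : {i // i ∈ S}, ChScS ⟨j, hj⟩ m * ChSSinv m k * e k := by
        intro m; rw [hd m, Finset.mul_sum]
        exact Finset.sum_congr rfl fun k _ => by ring
      rw [Finset.sum_congr rfl fun m _ => h4 m, Finset.sum_comm]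
      refine Finset.sum_congr rfl fun k _ => ?_
      rw [Matrix.mul_apply, Finset.sum_mul]
    rw [← h2]; ring
  rw [key]
  have hA : |(1 / (n : ℝ)) * (∑ r, Xh r j * η r) -
      (1 / (n : ℝ)) * (∑ r, Xh r j * ∑ k ∈ S, (Xh r k - X r k) * β₀ k)| ≤ α / (4 - α) * μ :=
    hnoise' j
  have hT : |∑ m : {i // i ∈ S}, (ChScS * ChSSinv) ⟨j, hj⟩ m * e m|
      ≤ (1 - α / 2) * (α / (4 - α) * μ + μ) := by
    calc |∑ m : {i // i ∈ S}, (ChScS * ChSSinv) ⟨j, hj⟩ m * e m|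
        ≤ ∑ m : {i // i ∈ S}, |(ChScS * ChSSinv) ⟨j, hj⟩ m * e m| := Finset.abs_sum_le_sum_abs _ _
      _ ≤ ∑ m : {i // i ∈ S}, |(ChScS * ChSSinv) ⟨j, hj⟩ m| * (α / (4 - α) * μ + μ) := by
          refine Finset.sum_le_sum fun m _ => ?_
          rw [abs_mul]
          exact mul_le_mul_of_nonneg_left (hemax m) (abs_nonneg _)
      _ = (∑ m : {i // i ∈ S}, |(ChScS * ChSSinv) ⟨j, hj⟩ m|) * (α / (4 - α) * μ + μ) := by
          rw [Finset.sum_mul]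
      _ ≤ (1 - α / 2) * (α / (4 - α) * μ + μ) := by
          refine mul_le_mul_of_nonneg_right (hirr ⟨j, hj⟩) ?_
          have : 0 ≤ α / (4 - α) * μ := by positivity
          linarith
  calc |((1 / (n : ℝ)) * (∑ r, Xh r j * η r) -
          (1 / (n : ℝ)) * (∑ r, Xh r j * ∑ k ∈ S, (Xh r k - X r k) * β₀ k))
        - ∑ m : {i // i ∈ S}, (ChScS * ChSSinv) ⟨j, hj⟩ m * e m|
      ≤ α / (4 - α) * μ + (1 - α / 2) * (α / (4 - α) * μ + μ) :=
        (abs_sub _ _).trans (add_le_add hA hT)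
    _ = μ := by field_simp; ring
end

section
/- For a > 2 and λ > 0, the SCAD thresholding operator S_SCAD(t; λ), defined by sgn(t)(|t|−λ)₊ for |t| ≤ 2λ, sgn(t)·(|t| − aλ/(a−1))/(1 − 1/(a−1)) for 2λ < |t| ≤ aλ, and t for |t| > aλ, is a global minimizer over θ ∈ ℝ of (1/2)(θ − t)² + p_λ(|θ|), where p_λ is the SCAD penalty p_λ(u) = λ∫₀ᵘ {1_{θ≤λ} + ((aλ−θ)₊/((a−1)λ))1_{θ>λ}} dθ. -/
open intervalIntegral


noncomputable def scadP (a lam u : ℝ) : ℝ :=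
  if u ≤ lam then lam * u
  else if u ≤ a * lam then (2*a*lam*u - u^2 - lam^2) / (2*(a-1))
  else (a+1) * lam^2 / 2

lemma scad_integrand_eq (a lam : ℝ) (ha : 2 < a) (hlam : 0 < lam) (θ : ℝ) :
    ((if θ ≤ lam then (1:ℝ) else 0)
      + (max (a*lam - θ) 0 / ((a-1)*lam)) * (if lam < θ then 1 else 0))
    = min 1 (max (a*lam - θ) 0 / ((a-1)*lam)) := by
  have h1 : (0:ℝ) < (a-1)*lam := by nlinarith
  rcases le_or_gt θ lam with h | h
  · have hmax : max (a*lam - θ) 0 = a*lam - θ := by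
      rw [max_eq_left]; nlinarith
    have : (1:ℝ) ≤ (a*lam - θ) / ((a-1)*lam) := by
      rw [le_div_iff₀ h1]; nlinarith
    simp [h, not_lt.mpr h, hmax, min_eq_left this]
  · have hr1 : max (a*lam - θ) 0 / ((a-1)*lam) ≤ 1 := by
      rw [div_le_one h1, max_le_iff]
      constructor <;> nlinarith
    simp [not_le.mpr h, h, min_eq_right hr1]

lemma int_mid (a lam : ℝ) (ha : 2 < a) (hlam : 0 < lam) (v u : ℝ) (hv : lam ≤ v) (hu : v ≤ u)
    (hu2 : u ≤ a*lam) :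
    ∫ θ in v..u, min 1 (max (a*lam - θ) 0 / ((a-1)*lam))
      = (a*lam*(u-v) - (u^2-v^2)/2) / ((a-1)*lam) := by
  have h1 : (0:ℝ) < (a-1)*lam := by nlinarith
  rw [intervalIntegral.integral_congr (g := fun θ => (a*lam - θ) / ((a-1)*lam))]
  · rw [intervalIntegral.integral_div, intervalIntegral.integral_sub
      (intervalIntegrable_const) intervalIntegrable_id,
      intervalIntegral.integral_const, integral_id]
    field_simp; ring
  · intro θ hθ
    rw [Set.uIcc_of_le hu] at hθ
    have h2 : max (a*lam - θ) 0 = a*lam - θ := by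
      rw [max_eq_left]; nlinarith [hθ.1, hθ.2]
    have h3 : (a*lam - θ) / ((a-1)*lam) ≤ 1 := by
      rw [div_le_one h1]; nlinarith [hθ.1]
    simp only [h2, min_eq_right h3]

lemma int_low (a lam : ℝ) (ha : 2 < a) (hlam : 0 < lam) (u : ℝ) (hu : 0 ≤ u) (hu2 : u ≤ lam) :
    ∫ θ in (0:ℝ)..u, min 1 (max (a*lam - θ) 0 / ((a-1)*lam)) = u := by
  have h1 : (0:ℝ) < (a-1)*lam := by nlinarith
  rw [intervalIntegral.integral_congr (g := fun _ => (1:ℝ))]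
  · simp
  · intro θ hθ
    rw [Set.uIcc_of_le hu] at hθ
    have h2 : max (a*lam - θ) 0 = a*lam - θ := by
      rw [max_eq_left]; nlinarith [hθ.1, hθ.2]
    have h3 : (1:ℝ) ≤ (a*lam - θ) / ((a-1)*lam) := by
      rw [le_div_iff₀ h1]; nlinarith [hθ.1, hθ.2]
    simp only [h2, min_eq_left h3]

lemma hcont (a lam : ℝ) : Continuous (fun θ : ℝ => min 1 (max (a*lam - θ) 0 / ((a-1)*lam))) := by
  exact continuous_const.min (((continuous_const.sub continuous_id).max continuous_const).div_const _)

lemma scadP_eq (a lam : ℝ) (ha : 2 < a) (hlam : 0 < lam) (u : ℝ) (hu : 0 ≤ u) :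
    (lam * ∫ θ in (0:ℝ)..u,
        ((if θ ≤ lam then (1:ℝ) else 0)
          + (max (a*lam - θ) 0 / ((a-1)*lam)) * (if lam < θ then 1 else 0)))
    = scadP a lam u := by
  have h1 : (0:ℝ) < (a-1)*lam := by nlinarith
  have hII : ∀ x y : ℝ, IntervalIntegrable
      (fun θ : ℝ => min 1 (max (a*lam - θ) 0 / ((a-1)*lam))) MeasureTheory.volume x y :=
    fun x y => (hcont a lam).intervalIntegrable x y
  rw [show (fun θ : ℝ => ((if θ ≤ lam then (1:ℝ) else 0)
        + (max (a*lam - θ) 0 / ((a-1)*lam)) * (if lam < θ then 1 else 0)))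
      = fun θ : ℝ => min 1 (max (a*lam - θ) 0 / ((a-1)*lam)) from
    funext (scad_integrand_eq a lam ha hlam)]
  unfold scadP
  rcases le_or_gt u lam with h | h
  · rw [int_low a lam ha hlam u hu h, if_pos h]
  · rw [if_neg (not_le.mpr h)]
    rcases le_or_gt u (a*lam) with h2 | h2
    · rw [← intervalIntegral.integral_add_adjacent_intervals (b := lam) (hII 0 lam) (hII lam u),
        int_low a lam ha hlam lam hlam.le le_rfl,
        int_mid a lam ha hlam lam u le_rfl h.le h2, if_pos h2]
      have hne : a - 1 ≠ 0 := by nlinarith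
      field_simp
      ring
    · have halam : lam < a*lam := by nlinarith
      rw [← intervalIntegral.integral_add_adjacent_intervals (b := a*lam) (hII 0 _) (hII _ u),
        ← intervalIntegral.integral_add_adjacent_intervals (b := lam) (hII 0 lam) (hII lam _),
        int_low a lam ha hlam lam hlam.le le_rfl,
        int_mid a lam ha hlam lam (a*lam) le_rfl halam.le le_rfl, if_neg (not_le.mpr h2)]
      have hz : ∫ θ in (a*lam)..u, min 1 (max (a*lam - θ) 0 / ((a-1)*lam)) = 0 := by
        rw [intervalIntegral.integral_congr (g := fun _ => (0:ℝ))]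
        · simp
        · intro θ hθ
          rw [Set.uIcc_of_le h2.le] at hθ
          have : max (a*lam - θ) 0 = 0 := by
            rw [max_eq_right]; nlinarith [hθ.1]
          simp [this]
      rw [hz]
      have hne : a - 1 ≠ 0 := by nlinarith
      field_simp
      ring

noncomputable def scadS (a lam t : ℝ) : ℝ :=
  if t ≤ 2*lam then max (t - lam) 0
  else if t ≤ a*lam then ((a-1)*t - a*lam) / (a-2)
  else t

lemma scadS_nonneg (a lam t : ℝ) (ha : 2 < a) (hlam : 0 < lam) (ht : 0 ≤ t) :
    0 ≤ scadS a lam t := by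
  unfold scadS
  split_ifs with h1 h2
  · exact le_max_right _ _
  · apply div_nonneg _ (by nlinarith)
    nlinarith
  · exact ht

set_option maxHeartbeats 1000000 in
lemma key (a lam t : ℝ) (ha : 2 < a) (hlam : 0 < lam) (ht : 0 ≤ t) (θ : ℝ) (hθ : 0 ≤ θ) :
    (1/2) * (scadS a lam t - t)^2 + scadP a lam (scadS a lam t)
      ≤ (1/2) * (θ - t)^2 + scadP a lam θ := by
  have ha1 : (0:ℝ) < a - 1 := by linarith
  have ha2 : (0:ℝ) < a - 2 := by linarith
  have hc : (0:ℝ) < 2*(a-1) := by linarith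
  have hq : ∀ x : ℝ, (2*a*lam*x - x^2 - lam^2) / (2*(a-1)) * (2*(a-1))
      = 2*a*lam*x - x^2 - lam^2 := fun x => div_mul_cancel₀ _ hc.ne'
  unfold scadS scadP
  rcases le_or_gt t lam with h1 | h1
  · -- S = 0
    have hS : max (t - lam) 0 = 0 := max_eq_right (by linarith)
    rw [if_pos (by linarith : t ≤ 2*lam), hS, if_pos (by linarith : (0:ℝ) ≤ lam)]
    split_ifs with k1 k2
    · nlinarith
    · push_neg at k1
      rw [← mul_le_mul_iff_of_pos_right hc]
      nlinarith [hq θ, mul_nonneg (mul_nonneg ha1.le hθ) (sub_nonneg.2 h1),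
        mul_nonneg ha2.le (mul_nonneg (by linarith : (0:ℝ) ≤ θ - lam) (by linarith : (0:ℝ) ≤ θ + lam)),
        mul_nonneg hlam.le (by linarith : (0:ℝ) ≤ θ - lam),
        mul_pos ha2 (mul_pos hlam hlam)]
    · push_neg at k1 k2
      nlinarith [sq_nonneg (θ - lam), mul_nonneg hθ (sub_nonneg.2 h1)]
  · rcases le_or_gt t (2*lam) with h2 | h2
    · -- S = t - lam ∈ (0, lam]
      have hS : max (t - lam) 0 = t - lam := max_eq_left (by linarith)
      rw [if_pos h2, hS, if_pos (by linarith : t - lam ≤ lam)]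
      split_ifs with k1 k2
      · nlinarith [sq_nonneg (θ - (t - lam))]
      · push_neg at k1
        rw [← mul_le_mul_iff_of_pos_right hc]
        nlinarith [hq θ, sq_nonneg (2*lam - t), mul_nonneg ha2.le (sub_nonneg.2 k1.le),
          mul_nonneg (sub_nonneg.2 k1.le)
            ((by nlinarith [mul_nonneg ha2.le (sub_nonneg.2 k1.le)] :
              (0:ℝ) ≤ (a-2)*(θ+lam) - 2*(a-1)*t + 2*a*lam))]
      · push_neg at k1 k2
        nlinarith [sq_nonneg (θ - t), mul_nonneg hlam.le (by linarith : (0:ℝ) ≤ 2*lam - t),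
          mul_nonneg ha2.le (mul_pos hlam hlam).le]
    · rcases le_or_gt t (a*lam) with h3 | h3
      · -- S = ((a-1)t - a lam)/(a-2) ∈ (lam, a lam]
        set s := ((a-1)*t - a*lam) / (a-2) with hs
        have hsv : (a-2) * s = (a-1)*t - a*lam := by
          rw [hs]; field_simp
        have hs1 : lam < s := by
          rw [hs, lt_div_iff₀ ha2]; nlinarith
        have hs2 : s ≤ a*lam := by
          rw [hs, div_le_iff₀ ha2]; nlinarith
        have hsvs : ((a-2)*s)*s = ((a-1)*t - a*lam)*s := by rw [hsv]
        have hsvt : ((a-2)*s)*t = ((a-1)*t - a*lam)*t := by rw [hsv]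
        have hsvl : ((a-2)*s)*lam = ((a-1)*t - a*lam)*lam := by rw [hsv]
        have hsvq : ((a-2)*s)*θ = ((a-1)*t - a*lam)*θ := by rw [hsv]
        rw [if_neg (not_le.mpr h2), if_pos h3, if_neg (not_le.mpr hs1), if_pos hs2]
        split_ifs with k1 k2
        · rw [← mul_le_mul_iff_of_pos_right hc]
          nlinarith [hq s, hsvs, hsvt, hsvl, hsvq,
            mul_nonneg (mul_nonneg ha1.le (sub_nonneg.2 k1))
              (show (0:ℝ) ≤ 2*t - θ - 3*lam by linarith),
            mul_nonneg ha2.le (sq_nonneg (lam - s))]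
        · push_neg at k1
          rw [← mul_le_mul_iff_of_pos_right hc]
          nlinarith [hq s, hq θ, hsvs, hsvt, hsvl, hsvq,
            mul_nonneg ha2.le (sq_nonneg (θ - s))]
        · push_neg at k1 k2
          rw [← mul_le_mul_iff_of_pos_right hc]
          nlinarith [hq s, hsvs, hsvt, hsvl, hsvq,
            mul_nonneg (mul_nonneg ha1.le (by linarith : (0:ℝ) ≤ θ - a*lam))
              (by linarith : (0:ℝ) ≤ θ + a*lam - 2*t),
            mul_nonneg ha2.le (sq_nonneg (a*lam - s))]
      · -- S = t > a lam
        have htl : ¬ t ≤ lam := by push_neg; nlinarith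
        have htal : ¬ t ≤ a*lam := not_le.mpr h3
        rw [if_neg (not_le.mpr h2), if_neg htal, if_neg htl, if_neg htal]
        split_ifs with k1 k2
        · nlinarith [mul_nonneg (sub_nonneg.2 k1) ((by nlinarith : (0:ℝ) ≤ 2*t - θ - 3*lam)),
            mul_nonneg ha1.le ha2.le, mul_nonneg (by linarith : (0:ℝ) ≤ t - a*lam)
              ((by nlinarith : (0:ℝ) ≤ t + (a-2)*lam)),
            mul_nonneg (mul_nonneg ha1.le ha2.le) (mul_pos hlam hlam).le]
        · push_neg at k1
          rw [← mul_le_mul_iff_of_pos_right hc]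
          nlinarith [hq θ, mul_nonneg (by linarith : (0:ℝ) ≤ a*lam - θ)
              ((by nlinarith [mul_nonneg ha1.le (by linarith : (0:ℝ) ≤ t - a*lam),
                  mul_nonneg ha2.le (by linarith : (0:ℝ) ≤ a*lam - θ)] :
                (0:ℝ) ≤ 2*(a-1)*t - (a-2)*θ - a^2*lam)),
            mul_nonneg ha1.le (sq_nonneg (a*lam - t))]
        · push_neg at k1 k2
          nlinarith [sq_nonneg (θ - t)]

lemma scadS_def (a lam t : ℝ) : scadS a lam t =
  if t ≤ 2*lam then max (t - lam) 0
  else if t ≤ a*lam then ((a-1)*t - a*lam) / (a-2)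
  else t := rfl

lemma habs (t θ : ℝ) (ht : 0 ≤ t) : (|θ| - t)^2 ≤ (θ - t)^2 := by
  rcases abs_cases θ with ⟨h, _⟩ | ⟨h, h2⟩
  · rw [h]
  · rw [h]; nlinarith [mul_nonneg ht (neg_nonneg.2 h2.le)]

/-- The SCAD thresholding operator is a global minimizer of the univariate SCAD-penalized
least squares objective `(1/2)(θ − t)² + p_λ(|θ|)`, where `p_λ` is the SCAD penalty of
Fan & Li with parameters `λ > 0` and `a > 2`. -/
theorem stmt12 (a lam t : ℝ) (ha : 2 < a) (hlam : 0 < lam) :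
    let p : ℝ → ℝ := fun u =>
      lam * ∫ θ in (0:ℝ)..u,
        ((if θ ≤ lam then 1 else 0) + (max (a * lam - θ) 0 / ((a - 1) * lam)) * (if lam < θ then 1 else 0))
    let Sscad : ℝ :=
      if |t| ≤ 2 * lam then Real.sign t * max (|t| - lam) 0
      else if |t| ≤ a * lam then Real.sign t * ((|t| - a * lam / (a - 1)) / (1 - 1 / (a - 1)))
      else t
    ∀ θ : ℝ, (1 / 2) * (Sscad - t) ^ 2 + p |Sscad| ≤ (1 / 2) * (θ - t) ^ 2 + p |θ| := by
  intro p Sscad θ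
  have ha1 : (a:ℝ) - 1 ≠ 0 := by intro h; nlinarith
  have ha2 : (a:ℝ) - 2 ≠ 0 := by intro h; nlinarith
  have hp : ∀ u : ℝ, 0 ≤ u → p u = scadP a lam u := fun u hu => scadP_eq a lam ha hlam u hu
  have hmid : ∀ x : ℝ, (x - a * lam / (a - 1)) / (1 - 1 / (a - 1)) = ((a-1)*x - a*lam) / (a-2) := by
    intro x
    rw [div_eq_div_iff (ne_of_gt (sub_pos.2 ((div_lt_one (by linarith)).2 (by linarith)))) (by exact ha2)]
    field_simp
    ring
  rw [hp _ (abs_nonneg _), hp _ (abs_nonneg _)]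
  rcases le_or_gt 0 t with ht | ht
  · -- t ≥ 0
    have habst : |t| = t := abs_of_nonneg ht
    have hS : Sscad = scadS a lam t := by
      show (if |t| ≤ 2 * lam then Real.sign t * max (|t| - lam) 0
        else if |t| ≤ a * lam then Real.sign t * ((|t| - a * lam / (a - 1)) / (1 - 1 / (a - 1)))
        else t) = _
      rw [scadS_def, habst]
      rcases eq_or_lt_of_le ht with h0 | h0
      · rw [← h0]
        simp [Real.sign_zero, max_eq_right (by linarith : -(0:ℝ) + -lam ≤ 0)]
        rw [if_pos hlam.le, max_eq_right (by linarith : -lam ≤ (0:ℝ))]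
      · rw [Real.sign_of_pos h0, one_mul, one_mul, hmid]
    rw [hS, abs_of_nonneg (scadS_nonneg a lam t ha hlam ht)]
    calc (1/2) * (scadS a lam t - t)^2 + scadP a lam (scadS a lam t)
        ≤ (1/2) * (|θ| - t)^2 + scadP a lam |θ| := key a lam t ha hlam ht |θ| (abs_nonneg θ)
      _ ≤ (1/2) * (θ - t)^2 + scadP a lam |θ| := by
          have := habs t θ ht; linarith
  · -- t < 0
    have habst : |t| = -t := abs_of_neg ht
    have hS : Sscad = -(scadS a lam (-t)) := by
      show (if |t| ≤ 2 * lam then Real.sign t * max (|t| - lam) 0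
        else if |t| ≤ a * lam then Real.sign t * ((|t| - a * lam / (a - 1)) / (1 - 1 / (a - 1)))
        else t) = _
      rw [scadS_def, habst, Real.sign_of_neg ht]
      split_ifs with h1 h2
      · ring
      · rw [hmid]; ring
      · ring
    have hSn : 0 ≤ scadS a lam (-t) := scadS_nonneg a lam (-t) ha hlam (by linarith)
    rw [hS, abs_neg, abs_of_nonneg hSn]
    have h1 := key a lam (-t) ha hlam (by linarith) |θ| (abs_nonneg θ)
    have h2 := habs (-t) (-θ) (by linarith)
    rw [abs_neg] at h2
    have e1 : (-(scadS a lam (-t)) - t)^2 = (scadS a lam (-t) - -t)^2 := by ring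
    have e2 : (-θ - -t)^2 = (θ - t)^2 := by ring
    rw [e1]
    nlinarith [h1, h2]
end

section
/- For a > 1 and λ > 0, the MCP thresholding operator S_MCP(t; λ), defined by sgn(t)(|t|−λ)₊/(1 − 1/a) for |t| ≤ aλ and t for |t| > aλ, is a global minimizer over θ ∈ ℝ of (1/2)(θ − t)² + p_λ(|θ|), where p_λ(u) = ∫₀ᵘ ((aλ − θ)₊/a) dθ is the minimax concave penalty. -/
open intervalIntegral

set_option maxHeartbeats 800000 in
private lemma mcpPform (a lam : ℝ) (ha : 1 < a) (hlam : 0 < lam) (u : ℝ) (hu : 0 ≤ u) :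
    (∫ θ in (0:ℝ)..u, max (a * lam - θ) 0 / a)
      = if u ≤ a * lam then lam * u - u ^ 2 / (2 * a) else a * lam ^ 2 / 2 := by
  have ha0 : (0:ℝ) < a := lt_trans one_pos ha
  have hcont : Continuous fun θ : ℝ => max (a * lam - θ) 0 / a :=
    ((continuous_const.sub continuous_id).max continuous_const).div_const a
  have base : ∀ v : ℝ, 0 ≤ v → v ≤ a * lam →
      (∫ θ in (0:ℝ)..v, max (a * lam - θ) 0 / a) = lam * v - v ^ 2 / (2 * a) := by
    intro v hv0 hv
    have h1 : (∫ θ in (0:ℝ)..v, max (a * lam - θ) 0 / a)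
        = ∫ θ in (0:ℝ)..v, (a * lam - θ) / a := by
      apply intervalIntegral.integral_congr
      intro x hx
      rw [Set.uIcc_of_le hv0] at hx
      have : x ≤ a * lam := le_trans hx.2 hv
      simp [max_eq_left (by linarith : (0:ℝ) ≤ a * lam - x)]
    rw [h1]
    have h2 : (∫ θ in (0:ℝ)..v, (a * lam - θ) / a)
        = (∫ θ in (0:ℝ)..v, (a*lam)/a) - (∫ θ in (0:ℝ)..v, θ) / a := by
      rw [← intervalIntegral.integral_div, ← intervalIntegral.integral_sub]
      · congr 1; ext θ; ring
      · exact intervalIntegrable_const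
      · exact (intervalIntegral.intervalIntegrable_id).div_const a
    rw [h2, integral_const, integral_id]
    field_simp
    ring
  by_cases h : u ≤ a * lam
  · rw [if_pos h]; exact base u hu h
  · rw [if_neg h]
    push_neg at h
    have halam : 0 ≤ a * lam := by positivity
    have split : (∫ θ in (0:ℝ)..u, max (a * lam - θ) 0 / a)
        = (∫ θ in (0:ℝ)..(a*lam), max (a * lam - θ) 0 / a)
          + ∫ θ in (a*lam)..u, max (a * lam - θ) 0 / a := by
      rw [intervalIntegral.integral_add_adjacent_intervals] <;>
        exact hcont.intervalIntegrable _ _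
    rw [split, base (a*lam) halam le_rfl]
    have hz : (∫ θ in (a*lam)..u, max (a * lam - θ) 0 / a) = 0 := by
      have : (∫ θ in (a*lam)..u, max (a * lam - θ) 0 / a)
          = ∫ θ in (a*lam)..u, (0:ℝ) := by
        apply intervalIntegral.integral_congr
        intro x hx
        rw [Set.uIcc_of_le h.le] at hx
        simp [max_eq_right (by linarith [hx.1] : a * lam - x ≤ 0)]
      rw [this, intervalIntegral.integral_zero]
    rw [hz]
    field_simp
    ring

set_option maxHeartbeats 800000 in
private lemma mcpKeymin (a lam tau : ℝ) (ha : 1 < a) (hlam : 0 < lam) :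
    ∀ r : ℝ, 0 ≤ r →
      ((1:ℝ)/2) * ((if tau ≤ a*lam then max (tau - lam) 0 / (1 - 1/a) else tau) - tau) ^ 2
        + (if (if tau ≤ a*lam then max (tau - lam) 0 / (1 - 1/a) else tau) ≤ a*lam
            then lam * (if tau ≤ a*lam then max (tau - lam) 0 / (1 - 1/a) else tau)
              - (if tau ≤ a*lam then max (tau - lam) 0 / (1 - 1/a) else tau) ^ 2 / (2*a)
            else a * lam ^ 2 / 2)
      ≤ ((1:ℝ)/2) * (r - tau) ^ 2
        + (if r ≤ a*lam then lam * r - r ^ 2 / (2*a) else a * lam ^ 2 / 2) := by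
  intro r hr
  have ha0 : (0:ℝ) < a := lt_trans one_pos ha
  have ha1 : (0:ℝ) < a - 1 := by linarith
  have hd : (0:ℝ) < 1 - 1/a := by
    rw [sub_pos, div_lt_one ha0]; exact ha
  by_cases hcase : tau ≤ a * lam
  · rw [if_pos hcase]
    by_cases hsmall : tau ≤ lam
    · -- s = 0
      have hs : max (tau - lam) 0 / (1 - 1/a) = 0 := by
        rw [max_eq_right (by linarith : tau - lam ≤ 0), zero_div]
      rw [hs]
      have h0le : (0:ℝ) ≤ a * lam := by positivity
      rw [if_pos h0le]
      by_cases hrle : r ≤ a * lam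
      · rw [if_pos hrle]
        have h1 : 0 ≤ r * (lam - tau) := mul_nonneg hr (by linarith)
        have hz : lam * 0 - (0:ℝ) ^ 2 / (2 * a) = 0 := by simp
        rw [hz]
        have h3 : r ^ 2 / (2*a) ≤ r ^ 2 / 2 := by
          apply div_le_div_of_nonneg_left (sq_nonneg r) two_pos (by linarith)
        nlinarith [h1, h3]
      · rw [if_neg hrle]
        push_neg at hrle
        have h1 : (a*lam - tau)^2 ≤ (r - tau)^2 := by
          nlinarith [mul_nonneg (by linarith : (0:ℝ) ≤ r - a*lam)
            (by linarith : (0:ℝ) ≤ r + a*lam - 2*tau)]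
        have h2 : (0:ℝ) ≤ a*lam*(a*lam + lam - 2*tau) := by
          apply mul_nonneg h0le; linarith
        have hz : lam * 0 - (0:ℝ) ^ 2 / (2 * a) = 0 := by simp
        rw [hz]
        nlinarith [h1, h2]
    · -- s = a(tau-lam)/(a-1), lam < tau ≤ a lam
      push_neg at hsmall
      have hs : max (tau - lam) 0 / (1 - 1/a) = a * (tau - lam) / (a - 1) := by
        rw [max_eq_left (by linarith : (0:ℝ) ≤ tau - lam)]
        rw [div_eq_div_iff (by linarith) (by linarith)]
        field_simp
      rw [hs]
      set s := a * (tau - lam) / (a - 1) with hsdef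
      have hsle : s ≤ a * lam := by
        rw [hsdef, div_le_iff₀ (by linarith)]
        nlinarith
      rw [if_pos hsle]
      have hval : (1:ℝ)/2 * (s - tau)^2 + (lam * s - s^2/(2*a))
          = a*lam^2/2 + (1:ℝ)/2 * (a*lam - tau)^2 - (a-1)/(2*a) * (a*lam - s)^2 := by
        rw [hsdef]; field_simp; ring
      by_cases hrle : r ≤ a * lam
      · rw [if_pos hrle]
        have hid : (1:ℝ)/2 * (r - tau)^2 + (lam * r - r^2/(2*a))
            - ((1:ℝ)/2 * (s - tau)^2 + (lam * s - s^2/(2*a)))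
            = (a-1)/(2*a) * (r - s)^2 := by
          rw [hsdef]; field_simp; ring
        have h2 : 0 ≤ (a-1)/(2*a) * (r - s)^2 :=
          mul_nonneg (div_nonneg ha1.le (by positivity)) (sq_nonneg _)
        linarith
      · rw [if_neg hrle]
        push_neg at hrle
        have h1 : (a*lam - tau)^2 ≤ (r - tau)^2 := by
          nlinarith [mul_nonneg (by linarith : (0:ℝ) ≤ r - a*lam)
            (by linarith : (0:ℝ) ≤ r + a*lam - 2*tau)]
        have h2 : 0 ≤ (a-1)/(2*a) * (a*lam - s)^2 :=
          mul_nonneg (div_nonneg ha1.le (by positivity)) (sq_nonneg _)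
        linarith
  · -- tau > a lam : s = tau
    rw [if_neg hcase]
    push_neg at hcase
    rw [if_neg (not_le.mpr hcase)]
    by_cases hrle : r ≤ a * lam
    · rw [if_pos hrle]
      have h1 : (a*lam - r)^2 ≤ (tau - r)^2 := by
        nlinarith [mul_nonneg (by linarith : (0:ℝ) ≤ tau - a*lam)
          (by linarith : (0:ℝ) ≤ tau + a*lam - 2*r)]
      have hid : (1:ℝ)/2 * (a*lam - r)^2 + (lam * r - r^2/(2*a)) - a*lam^2/2
          = (a-1)/(2*a) * (a*lam - r)^2 := by field_simp; ring
      have h2 : 0 ≤ (a-1)/(2*a) * (a*lam - r)^2 :=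
        mul_nonneg (div_nonneg ha1.le (by positivity)) (sq_nonneg _)
      have h3 : (tau - r)^2 = (r - tau)^2 := by ring
      linarith
    · rw [if_neg hrle]
      nlinarith [sq_nonneg (r - tau)]

/-- The MCP thresholding operator is a global minimizer of the univariate MCP-penalized
least squares objective `(1/2)(θ − t)² + p_λ(|θ|)`, where `p_λ` is the minimax concave
penalty of Zhang with parameters `λ > 0` and `a > 1`. -/
theorem stmt13 (a lam t : ℝ) (ha : 1 < a) (hlam : 0 < lam) :
    let p : ℝ → ℝ := fun u => ∫ θ in (0:ℝ)..u, max (a * lam - θ) 0 / a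
    let Smcp : ℝ :=
      if |t| ≤ a * lam then Real.sign t * (max (|t| - lam) 0 / (1 - 1 / a))
      else t
    ∀ θ : ℝ, (1 / 2) * (Smcp - t) ^ 2 + p |Smcp| ≤ (1 / 2) * (θ - t) ^ 2 + p |θ| := by
  intro p Smcp θ
  have ha0 : (0:ℝ) < a := lt_trans one_pos ha
  have hd : (0:ℝ) < 1 - 1/a := by
    rw [sub_pos, div_lt_one ha0]; exact ha
  set s : ℝ := if |t| ≤ a*lam then max (|t| - lam) 0 / (1 - 1/a) else |t| with hsdef
  have hs0 : 0 ≤ s := by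
    rw [hsdef]
    split
    · exact div_nonneg (le_max_right _ _) hd.le
    · exact abs_nonneg t
  have habs : |Smcp| = s := by
    show |if |t| ≤ a * lam then Real.sign t * (max (|t| - lam) 0 / (1 - 1 / a)) else t| = s
    rw [hsdef]
    by_cases hc : |t| ≤ a * lam
    · rw [if_pos hc, if_pos hc]
      rcases lt_trichotomy t 0 with h | h | h
      · rw [Real.sign_of_neg h, neg_one_mul, abs_neg,
          abs_of_nonneg (div_nonneg (le_max_right _ _) hd.le)]
      · subst h
        rw [Real.sign_zero, zero_mul, abs_zero,
          max_eq_right (by linarith : (0:ℝ) - lam ≤ 0), zero_div]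
      · rw [Real.sign_of_pos h, one_mul,
          abs_of_nonneg (div_nonneg (le_max_right _ _) hd.le)]
    · rw [if_neg hc, if_neg hc]
  have hsq : (Smcp - t) ^ 2 = (s - |t|) ^ 2 := by
    show ((if |t| ≤ a * lam then Real.sign t * (max (|t| - lam) 0 / (1 - 1 / a)) else t) - t) ^ 2
      = (s - |t|) ^ 2
    rw [hsdef]
    by_cases hc : |t| ≤ a * lam
    · rw [if_pos hc, if_pos hc]
      rcases lt_trichotomy t 0 with h | h | h
      · rw [Real.sign_of_neg h, abs_of_neg h]; ring
      · subst h
        rw [Real.sign_zero, zero_mul, abs_zero,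
          max_eq_right (by linarith : (0:ℝ) - lam ≤ 0), zero_div]
      · rw [Real.sign_of_pos h, abs_of_pos h]; ring
    · rw [if_neg hc, if_neg hc]; simp
  have hk := mcpKeymin a lam |t| ha hlam |θ| (abs_nonneg θ)
  rw [← hsdef] at hk
  have hp1 : p |Smcp| = if s ≤ a*lam then lam * s - s ^ 2 / (2*a) else a * lam ^ 2 / 2 := by
    rw [habs]
    exact mcpPform a lam ha hlam s hs0
  have hp2 : p |θ| = if |θ| ≤ a*lam then lam * |θ| - |θ| ^ 2 / (2*a) else a * lam ^ 2 / 2 :=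
    mcpPform a lam ha hlam |θ| (abs_nonneg θ)
  have habs2 : (|θ| - |t|) ^ 2 ≤ (θ - t) ^ 2 := by
    have h := abs_abs_sub_abs_le_abs_sub θ t
    calc (|θ| - |t|) ^ 2 = |(|θ| - |t|)| ^ 2 := (sq_abs _).symm
      _ ≤ |θ - t| ^ 2 := by apply pow_le_pow_left₀ (abs_nonneg _) h
      _ = (θ - t) ^ 2 := sq_abs _
  rw [hp1, hp2, hsq]
  linarith [hk, habs2]
end
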